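/- arXiv:1307.3583 — 2 statements merged into one kernel-verified Lean document; each statement's English description precedes it below -/
import Mathlib

section
/- For every a < 0 with Ai(a) = 0 and every x ≥ 0, one has |Ai(x + a)| ≤ x·|Ai'(a)|. Equivalently, for each zero −αₙ of Ai, the normalized eigenfunction ψₙ(x) = Ai(x − αₙ)/|Ai'(−αₙ)| satisfies |ψₙ(x)| ≤ x for all x ≥ 0. -/
open MeasureTheory Filter Set

/-- The Airy function of the first kind, defined as
`Ai(x) = (1/π) · lim_{R→∞} ∫₀^R cos(t³/3 + x·t) dt`. -/
noncomputable def Ai (x : ℝ) : ℝ :=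
  (1 / Real.pi) *
    limUnder Filter.atTop (fun R : ℝ => ∫ t in (0:ℝ)..R, Real.cos (t ^ 3 / 3 + x * t))

open Complex Topology

noncomputable def aK (x : ℝ) (z : ℂ) : ℂ := Complex.exp (Complex.I * (z^3/3 + x*z))

lemma aK_norm (x s u : ℝ) : ‖aK x ((s:ℂ) + u*I)‖ = Real.exp (u^3/3 - s^2*u - x*u) := by
  rw [aK, Complex.norm_exp]
  congr 1
  simp [Complex.mul_re, Complex.mul_im, Complex.add_re, Complex.add_im, pow_succ]
  ring

lemma aK_hasDerivAt_z (x : ℝ) (z : ℂ) :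
    HasDerivAt (aK x) (I * (z^2 + x) * aK x z) z := by
  have h1 : HasDerivAt (fun z : ℂ => I * (z^3/3 + x*z)) (I * (z^2 + x)) z := by
    have := (((hasDerivAt_pow 3 z).div_const 3).add ((hasDerivAt_id z).const_mul (x:ℂ))).const_mul I
    exact this.congr_deriv (by push_cast; ring)
  exact h1.cexp.congr_deriv (by rw [aK]; ring)

lemma aK_hasDerivAt_x (x : ℝ) (z : ℂ) :
    HasDerivAt (fun x : ℝ => aK x z) (I * z * aK x z) x := by
  have h1 : HasDerivAt (fun w : ℂ => I * (z^3/3 + w*z)) (I * z) (x:ℂ) := by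
    have := (((hasDerivAt_id (x:ℂ)).mul_const z).const_add (z^3/3)).const_mul I
    exact this.congr_deriv (by ring)
  have h : HasDerivAt (fun w : ℂ => Complex.exp (I * (z^3/3 + w*z))) (I * z * aK x z) (x:ℂ) := by
    exact h1.cexp.congr_deriv (by rw [aK]; ring)
  exact h.comp_ofReal

lemma int_pow_gauss (k : ℕ) : IntegrableOn (fun s : ℝ => s^k * Real.exp (-s^2)) (Ioi 0) := by
  have h := integrableOn_rpow_mul_exp_neg_mul_sq (b := 1) one_pos
      (s := (k:ℝ)) (by exact_mod_cast neg_one_lt_zero.trans_le k.cast_nonneg)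
  apply (h.congr_fun ?_ measurableSet_Ioi)
  intro s hs
  simp only [Real.rpow_natCast, neg_one_mul]

lemma int_poly_gauss (n : ℕ) : IntegrableOn (fun s : ℝ => (s+1)^n * Real.exp (-s^2)) (Ioi 0) := by
  have h : (fun s : ℝ => (s+1)^n * Real.exp (-s^2))
      = fun s : ℝ => ∑ k ∈ Finset.range (n+1), (n.choose k : ℝ) * (s^k * Real.exp (-s^2)) := by
    funext s
    rw [add_pow, Finset.sum_mul]
    apply Finset.sum_congr rfl
    intro k _
    ring
  rw [h]
  apply integrable_finset_sum
  intro k _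
  exact (int_pow_gauss k).const_mul _

lemma aK_continuous (x : ℝ) : Continuous (aK x) := by
  unfold aK
  continuity

lemma integrableOn_g_aK (x : ℝ) (g : ℂ → ℂ) (n : ℕ) (C : ℝ) (hg : Continuous g)
    (hb : ∀ s : ℝ, 0 ≤ s → ‖g ((s:ℂ)+I)‖ ≤ C * (s+1)^n) :
    IntegrableOn (fun s : ℝ => g ((s:ℂ)+I) * aK x ((s:ℂ)+I)) (Ioi 0) := by
  have hmeas : AEStronglyMeasurable (fun s : ℝ => g ((s:ℂ)+I) * aK x ((s:ℂ)+I))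
      (volume.restrict (Ioi 0)) := by
    apply Continuous.aestronglyMeasurable
    exact (hg.comp (by continuity)).mul ((aK_continuous x).comp (by continuity))
  have hint : IntegrableOn (fun s : ℝ => (C * Real.exp (1/3 - x)) * ((s+1)^n * Real.exp (-s^2)))
      (Ioi 0) := (int_poly_gauss n).const_mul _
  apply Integrable.mono' hint hmeas
  filter_upwards [ae_restrict_mem measurableSet_Ioi] with s hs
  have hs0 : (0:ℝ) ≤ s := le_of_lt hs
  rw [norm_mul]
  have h1 : ‖aK x ((s:ℂ)+I)‖ = Real.exp (1/3 - x) * Real.exp (-s^2) := by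
    have := aK_norm x s 1
    simp only [Complex.ofReal_one, one_mul] at this
    rw [this, ← Real.exp_add]
    ring_nf
  rw [h1]
  have h2 : ‖g ((s:ℂ)+I)‖ ≤ C * (s+1)^n := hb s hs0
  have h3 : (0:ℝ) < Real.exp (1/3 - x) * Real.exp (-s^2) := by positivity
  calc ‖g ((s:ℂ)+I)‖ * (Real.exp (1/3 - x) * Real.exp (-s^2))
      ≤ (C * (s+1)^n) * (Real.exp (1/3 - x) * Real.exp (-s^2)) := by
        exact mul_le_mul_of_nonneg_right h2 h3.le
    _ = (C * Real.exp (1/3 - x)) * ((s+1)^n * Real.exp (-s^2)) := by ring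

lemma norm_le_aux (s : ℝ) (hs : 0 ≤ s) : ‖(s:ℂ)+I‖ ≤ s+1 := by
  calc ‖(s:ℂ)+I‖ ≤ ‖(s:ℂ)‖ + ‖I‖ := norm_add_le _ _
    _ = |s| + 1 := by simp
    _ = s + 1 := by rw [_root_.abs_of_nonneg hs]

lemma hInt0 (x : ℝ) : IntegrableOn (fun s : ℝ => aK x ((s:ℂ)+I)) (Ioi 0) := by
  have := integrableOn_g_aK x (fun _ => 1) 0 1 continuous_const
    (fun s hs => by simp)
  simpa using this

lemma hInt1 (x : ℝ) : IntegrableOn (fun s : ℝ => I*((s:ℂ)+I) * aK x ((s:ℂ)+I)) (Ioi 0) := by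
  apply integrableOn_g_aK x (fun z => I*z) 1 1 (by continuity)
  intro s hs
  rw [norm_mul, Complex.norm_I, one_mul, one_mul, pow_one]
  exact norm_le_aux s hs

lemma hInt2 (x : ℝ) : IntegrableOn (fun s : ℝ => (-(((s:ℂ)+I)^2)) * aK x ((s:ℂ)+I)) (Ioi 0) := by
  apply integrableOn_g_aK x (fun z => -(z^2)) 2 1 (by continuity)
  intro s hs
  rw [norm_neg, norm_pow, one_mul]
  exact pow_le_pow_left₀ (norm_nonneg _) (norm_le_aux s hs) 2

lemma hInt3 (x : ℝ) : IntegrableOn (fun s : ℝ => I*(((s:ℂ)+I)^2+x) * aK x ((s:ℂ)+I)) (Ioi 0) := by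
  apply integrableOn_g_aK x (fun z => I*(z^2+x)) 2 (1+|x|) (by continuity)
  intro s hs
  rw [norm_mul, Complex.norm_I, one_mul]
  have h1 : ‖((s:ℂ)+I)^2 + x‖ ≤ ‖((s:ℂ)+I)‖^2 + |x| := by
    calc ‖((s:ℂ)+I)^2 + x‖ ≤ ‖((s:ℂ)+I)^2‖ + ‖(x:ℂ)‖ := norm_add_le _ _
      _ = ‖((s:ℂ)+I)‖^2 + |x| := by rw [norm_pow]; simp
  have h2 : ‖((s:ℂ)+I)‖^2 ≤ (s+1)^2 := pow_le_pow_left₀ (norm_nonneg _) (norm_le_aux s hs) 2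
  have h3 : (1:ℝ) ≤ (s+1)^2 := by nlinarith
  calc ‖((s:ℂ)+I)^2 + x‖ ≤ (s+1)^2 + |x| * 1 := by rw [mul_one]; linarith
    _ ≤ (s+1)^2 + |x| * (s+1)^2 := by
        have := abs_nonneg x; nlinarith
    _ = (1+|x|) * (s+1)^2 := by ring


noncomputable def Gc (x : ℝ) : ℂ :=
  (∫ s in Ioi (0:ℝ), aK x ((s:ℂ)+I)) + I • ∫ u in (0:ℝ)..1, aK x ((u:ℂ)*I)

lemma rect (x R : ℝ) :
    (∫ t in (0:ℝ)..R, aK x t) = (∫ t in (0:ℝ)..R, aK x ((t:ℂ) + I))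
      + (I • ∫ u in (0:ℝ)..1, aK x ((u:ℂ)*I)) - I • ∫ u in (0:ℝ)..1, aK x ((R:ℂ) + (u:ℂ)*I) := by
  have h := Complex.integral_boundary_rect_eq_zero_of_differentiableOn (aK x) 0 ((R:ℂ)+I)
    (fun z _ => ((aK_hasDerivAt_z x z).differentiableAt).differentiableWithinAt)
  simp only [Complex.zero_re, Complex.zero_im, Complex.add_re, Complex.add_im, Complex.ofReal_re,
    Complex.ofReal_im, Complex.I_re, Complex.I_im, add_zero, zero_add, Complex.ofReal_zero,
    zero_mul, Complex.ofReal_one, one_mul] at h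
  linear_combination h

lemma exp_int (c : ℝ) (hc : c ≠ 0) :
    ∫ u in (0:ℝ)..1, Real.exp (-c*u) = (1 - Real.exp (-c))/c := by
  have hd : ∀ u ∈ Set.uIcc (0:ℝ) 1, HasDerivAt (fun u : ℝ => -Real.exp (-c*u)/c)
      (Real.exp (-c*u)) u := by
    intro u _
    have h1 : HasDerivAt (fun u : ℝ => -c*u) (-c) u := by
      simpa using (hasDerivAt_id u).const_mul (-c)
    have h2 := (h1.exp.div_const c).neg
    convert h2 using 1
    · rfl
    · rfl
    · funext v; rw [neg_div, Pi.neg_apply]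
    · rw [mul_neg, neg_div, neg_neg, mul_div_assoc, div_self hc, mul_one]
  rw [intervalIntegral.integral_eq_sub_of_hasDerivAt hd
    (Continuous.intervalIntegrable (by continuity) _ _)]
  simp only [mul_one, mul_zero, Real.exp_zero]
  ring

lemma right_vanish (x : ℝ) :
    Tendsto (fun R : ℝ => I • ∫ u in (0:ℝ)..1, aK x ((R:ℂ) + (u:ℂ)*I)) atTop (𝓝 0) := by
  refine squeeze_zero_norm' (a := fun R : ℝ => Real.exp (1/3+|x|) / R^2) ?_ ?_
  · filter_upwards [eventually_ge_atTop (1:ℝ)] with R hR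
    have hR0 : (0:ℝ) < R := lt_of_lt_of_le one_pos hR
    have hR2 : R^2 ≠ 0 := by positivity
    have hb : ∀ u ∈ Icc (0:ℝ) 1, ‖aK x ((R:ℂ) + (u:ℂ)*I)‖
        ≤ Real.exp (1/3+|x|) * Real.exp (-(R^2)*u) := by
      intro u hu
      rw [aK_norm, ← Real.exp_add]
      apply Real.exp_le_exp.mpr
      have h1 : u^3/3 ≤ 1/3 := by
        have := pow_le_one₀ hu.1 hu.2 (n := 3)
        linarith
      have h2 : -(x*u) ≤ |x| := by
        have := neg_abs_le x
        nlinarith [hu.1, hu.2, abs_nonneg x]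
      nlinarith
    calc ‖I • ∫ u in (0:ℝ)..1, aK x ((R:ℂ) + (u:ℂ)*I)‖
        = ‖∫ u in (0:ℝ)..1, aK x ((R:ℂ) + (u:ℂ)*I)‖ := by
          rw [norm_smul, Complex.norm_I, one_mul]
      _ ≤ ∫ u in (0:ℝ)..1, ‖aK x ((R:ℂ) + (u:ℂ)*I)‖ := by
          exact intervalIntegral.norm_integral_le_integral_norm zero_le_one
      _ ≤ ∫ u in (0:ℝ)..1, Real.exp (1/3+|x|) * Real.exp (-(R^2)*u) := by
          apply intervalIntegral.integral_mono_on zero_le_one _ _ hb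
          · exact (((aK_continuous x).comp (by continuity)).norm).intervalIntegrable _ _
          · exact Continuous.intervalIntegrable (by continuity) _ _
      _ = Real.exp (1/3+|x|) * ((1 - Real.exp (-(R^2)))/R^2) := by
          rw [intervalIntegral.integral_const_mul, exp_int _ hR2]
      _ ≤ Real.exp (1/3+|x|) / R^2 := by
          rw [div_eq_mul_one_div (Real.exp (1/3+|x|))]
          gcongr
          linarith [(Real.exp_pos (-(R^2))).le]
  · apply Tendsto.div_atTop tendsto_const_nhds
    exact tendsto_pow_atTop two_ne_zero

lemma tendsto_partial (x : ℝ) :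
    Tendsto (fun R : ℝ => ∫ t in (0:ℝ)..R, aK x t) atTop (𝓝 (Gc x)) := by
  have h1 : Tendsto (fun R : ℝ => ∫ t in (0:ℝ)..R, aK x ((t:ℂ) + I)) atTop
      (𝓝 (∫ s in Ioi (0:ℝ), aK x ((s:ℂ)+I))) :=
    intervalIntegral_tendsto_integral_Ioi 0 (hInt0 x) tendsto_id
  have h2 : Tendsto (fun R : ℝ => I • ∫ u in (0:ℝ)..1, aK x ((R:ℂ) + (u:ℂ)*I)) atTop (𝓝 0) :=
    right_vanish x
  have h3 := (h1.add_const (I • ∫ u in (0:ℝ)..1, aK x ((u:ℂ)*I))).sub h2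
  rw [sub_zero] at h3
  exact h3.congr (fun R => (rect x R).symm)

lemma cos_int_eq (x R : ℝ) :
    ∫ t in (0:ℝ)..R, Real.cos (t ^ 3 / 3 + x * t) = (∫ t in (0:ℝ)..R, aK x t).re := by
  have hInt : IntervalIntegrable (fun t : ℝ => aK x t) volume 0 R :=
    Continuous.intervalIntegrable ((aK_continuous x).comp Complex.continuous_ofReal) _ _
  rw [show (∫ t in (0:ℝ)..R, aK x t).re = Complex.reCLM (∫ t in (0:ℝ)..R, aK x t) from rfl,
    ← Complex.reCLM.intervalIntegral_comp_comm hInt]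
  apply intervalIntegral.integral_congr
  intro t _
  have h : aK x (t:ℂ) = Complex.exp ((t ^ 3 / 3 + x * t : ℝ) * I) := by
    rw [aK]
    congr 1
    push_cast
    ring
  simp only [Complex.reCLM_apply, h, Complex.exp_ofReal_mul_I_re]

lemma Ai_eq (x : ℝ) : Ai x = (1/Real.pi) * (Gc x).re := by
  unfold Ai
  congr 1
  apply Filter.Tendsto.limUnder_eq
  have := (Complex.continuous_re.tendsto (Gc x)).comp (tendsto_partial x)
  exact this.congr (fun R => (cos_int_eq x R).symm)

lemma aK_norm_vert (x u : ℝ) : ‖aK x ((u:ℂ)*I)‖ = Real.exp (u^3/3 - x*u) := by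
  have h := aK_norm x 0 u
  simpa using h

lemma hasDerivAt_Ioi_piece (x₀ : ℝ) (g : ℂ → ℂ) (hg : Continuous g) (n : ℕ) (C : ℝ)
    (hb : ∀ s : ℝ, 0 ≤ s → ‖g ((s:ℂ)+I)‖ ≤ C * (s+1)^n) :
    HasDerivAt (fun x : ℝ => ∫ s in Ioi (0:ℝ), g ((s:ℂ)+I) * aK x ((s:ℂ)+I))
      (∫ s in Ioi (0:ℝ), I*((s:ℂ)+I) * (g ((s:ℂ)+I) * aK x₀ ((s:ℂ)+I))) x₀ := by
  have key := hasDerivAt_integral_of_dominated_loc_of_deriv_le (μ := volume.restrict (Ioi 0))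
    (F := fun (x : ℝ) (s : ℝ) => g ((s:ℂ)+I) * aK x ((s:ℂ)+I))
    (F' := fun (x : ℝ) (s : ℝ) => I*((s:ℂ)+I) * (g ((s:ℂ)+I) * aK x ((s:ℂ)+I)))
    (x₀ := x₀) (s := Metric.ball x₀ 1) (Metric.ball_mem_nhds x₀ one_pos)
    (Filter.Eventually.of_forall (fun x => ((hg.comp (by continuity)).mul
      ((aK_continuous x).comp (by continuity))).aestronglyMeasurable))
    (integrableOn_g_aK x₀ g n C hg hb)
    (by
      apply Continuous.aestronglyMeasurable
      exact ((continuous_const.mul (by continuity)).mul ((hg.comp (by continuity)).mul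
        ((aK_continuous x₀).comp (by continuity)))))
    (bound := fun s => (C * Real.exp (1/3 - x₀ + 1)) * ((s+1)^(n+1) * Real.exp (-s^2)))
    (by
      filter_upwards [ae_restrict_mem measurableSet_Ioi] with s hs
      intro x hx
      have hs0 : (0:ℝ) ≤ s := le_of_lt hs
      have hxx : |x - x₀| < 1 := by simpa [Real.dist_eq] using hx
      have h1 : ‖aK x ((s:ℂ)+I)‖ ≤ Real.exp (1/3 - x₀ + 1) * Real.exp (-s^2) := by
        have hn := aK_norm x s 1
        simp only [Complex.ofReal_one, one_mul] at hn
        rw [hn, ← Real.exp_add]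
        apply Real.exp_le_exp.mpr
        have : x₀ - x < 1 := by cases' abs_lt.mp hxx with h h; linarith
        nlinarith
      rw [norm_mul, norm_mul, norm_mul, Complex.norm_I, one_mul]
      have h2 : ‖(s:ℂ)+I‖ ≤ s+1 := norm_le_aux s hs0
      have h3 : ‖g ((s:ℂ)+I)‖ ≤ C * (s+1)^n := hb s hs0
      have hC : (0:ℝ) ≤ C := by
        have h0 := (norm_nonneg (g (((0:ℝ):ℂ)+I))).trans (hb 0 le_rfl)
        simpa using h0
      calc ‖(s:ℂ)+I‖ * (‖g ((s:ℂ)+I)‖ * ‖aK x ((s:ℂ)+I)‖)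
          ≤ (s+1) * ((C * (s+1)^n) * (Real.exp (1/3 - x₀ + 1) * Real.exp (-s^2))) := by
            apply mul_le_mul h2 _ (by positivity) (by linarith)
            apply mul_le_mul h3 h1 (norm_nonneg _) (by positivity)
        _ = (C * Real.exp (1/3 - x₀ + 1)) * ((s+1)^(n+1) * Real.exp (-s^2)) := by ring)
    ((int_poly_gauss (n+1)).const_mul _)
    (by
      filter_upwards [] with s
      intro x _
      have h := (aK_hasDerivAt_x x ((s:ℂ)+I)).const_mul (g ((s:ℂ)+I))
      exact h.congr_deriv (by ring))
  exact key.2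

lemma hasDerivAt_int_piece (x₀ : ℝ) (g : ℂ → ℂ) (hg : Continuous g) :
    HasDerivAt (fun x : ℝ => ∫ u in (0:ℝ)..1, g ((u:ℂ)*I) * aK x ((u:ℂ)*I))
      (∫ u in (0:ℝ)..1, I*((u:ℂ)*I) * (g ((u:ℂ)*I) * aK x₀ ((u:ℂ)*I))) x₀ := by
  have key := intervalIntegral.hasDerivAt_integral_of_dominated_loc_of_deriv_le
    (μ := volume) (a := (0:ℝ)) (b := 1)
    (F := fun (x : ℝ) (u : ℝ) => g ((u:ℂ)*I) * aK x ((u:ℂ)*I))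
    (F' := fun (x : ℝ) (u : ℝ) => I*((u:ℂ)*I) * (g ((u:ℂ)*I) * aK x ((u:ℂ)*I)))
    (x₀ := x₀) (s := Metric.ball x₀ 1) (Metric.ball_mem_nhds x₀ one_pos)
    (Filter.Eventually.of_forall (fun x => ((hg.comp (by continuity)).mul
      ((aK_continuous x).comp (by continuity))).aestronglyMeasurable))
    (Continuous.intervalIntegrable ((hg.comp (by continuity)).mul
      ((aK_continuous x₀).comp (by continuity))) _ _)
    (by
      apply Continuous.aestronglyMeasurable
      exact ((continuous_const.mul (by continuity)).mul ((hg.comp (by continuity)).mul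
        ((aK_continuous x₀).comp (by continuity)))))
    (bound := fun u => ‖g ((u:ℂ)*I)‖ * Real.exp (1/3 + |x₀| + 1))
    (by
      filter_upwards [] with u
      intro hu x hx
      rw [Set.uIoc_of_le zero_le_one] at hu
      have hu0 : (0:ℝ) ≤ u := le_of_lt hu.1
      have hxx : |x| ≤ |x₀| + 1 := by
        have := abs_sub_abs_le_abs_sub x x₀
        have h2 : dist x x₀ < 1 := hx
        rw [Real.dist_eq] at h2
        linarith
      have hnorm : ‖I*((u:ℂ)*I) * (g ((u:ℂ)*I) * aK x ((u:ℂ)*I))‖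
          = ‖(u:ℂ)*I‖ * (‖g ((u:ℂ)*I)‖ * ‖aK x ((u:ℂ)*I)‖) := by
        rw [norm_mul, norm_mul, norm_mul, Complex.norm_I, one_mul, norm_mul]
      rw [hnorm]
      have h1 : ‖(u:ℂ)*I‖ ≤ 1 := by
        rw [norm_mul, Complex.norm_I, mul_one, Complex.norm_real, Real.norm_eq_abs,
          _root_.abs_of_nonneg hu0]
        exact hu.2
      have h2 : ‖aK x ((u:ℂ)*I)‖ ≤ Real.exp (1/3 + |x₀| + 1) := by
        rw [aK_norm_vert]
        apply Real.exp_le_exp.mpr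
        have h3 : u^3 ≤ 1 := pow_le_one₀ hu0 hu.2
        have h4 : -(x*u) ≤ |x| := by nlinarith [neg_abs_le x, abs_nonneg x, hu.2]
        linarith
      calc ‖(u:ℂ)*I‖ * (‖g ((u:ℂ)*I)‖ * ‖aK x ((u:ℂ)*I)‖)
          ≤ 1 * (‖g ((u:ℂ)*I)‖ * Real.exp (1/3 + |x₀| + 1)) := by
            apply mul_le_mul h1 _ (by positivity) zero_le_one
            exact mul_le_mul_of_nonneg_left h2 (norm_nonneg _)
        _ = ‖g ((u:ℂ)*I)‖ * Real.exp (1/3 + |x₀| + 1) := one_mul _)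
    (Continuous.intervalIntegrable (by
      exact ((hg.comp (by continuity)).norm.mul continuous_const)) _ _)
    (by
      filter_upwards [] with u
      intro hu x hx
      have h := (aK_hasDerivAt_x x ((u:ℂ)*I)).const_mul (g ((u:ℂ)*I))
      exact h.congr_deriv (by ring))
  exact key.2

noncomputable def Gd (x : ℝ) : ℂ :=
  (∫ s in Ioi (0:ℝ), I*((s:ℂ)+I) * aK x ((s:ℂ)+I))
    + I • ∫ u in (0:ℝ)..1, I*((u:ℂ)*I) * aK x ((u:ℂ)*I)

noncomputable def Gdd (x : ℝ) : ℂ :=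
  (∫ s in Ioi (0:ℝ), (-(((s:ℂ)+I)^2)) * aK x ((s:ℂ)+I))
    + I • ∫ u in (0:ℝ)..1, (-(((u:ℂ)*I)^2)) * aK x ((u:ℂ)*I)

lemma hasDerivAt_Gc (x : ℝ) : HasDerivAt Gc (Gd x) x := by
  have h1 := hasDerivAt_Ioi_piece x (fun _ => 1) continuous_const 0 1 (fun s _ => by simp)
  have h2 := (hasDerivAt_int_piece x (fun _ => 1) continuous_const).const_smul I
  have h := h1.add h2
  simp only [one_mul] at h
  exact h

lemma hasDerivAt_Gd (x : ℝ) : HasDerivAt Gd (Gdd x) x := by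
  have h1 := hasDerivAt_Ioi_piece x (fun z => I*z) (by continuity) 1 1
    (fun s hs => by
      rw [norm_mul, Complex.norm_I, one_mul, one_mul, pow_one]
      exact norm_le_aux s hs)
  have h2 := (hasDerivAt_int_piece x (fun z => I*z) (by continuity)).const_smul I
  have h := h1.add h2
  have e1 : (fun s : ℝ => I*((s:ℂ)+I) * (I*((s:ℂ)+I) * aK x ((s:ℂ)+I)))
      = fun s : ℝ => (-(((s:ℂ)+I)^2)) * aK x ((s:ℂ)+I) := by
    funext s
    have : I*((s:ℂ)+I) * (I*((s:ℂ)+I)) = -(((s:ℂ)+I)^2) := by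
      linear_combination (((s:ℂ)+I)^2) * Complex.I_sq
    rw [← mul_assoc, this]
  have e2 : (fun u : ℝ => I*((u:ℂ)*I) * (I*((u:ℂ)*I) * aK x ((u:ℂ)*I)))
      = fun u : ℝ => (-(((u:ℂ)*I)^2)) * aK x ((u:ℂ)*I) := by
    funext u
    have : I*((u:ℂ)*I) * (I*((u:ℂ)*I)) = -(((u:ℂ)*I)^2) := by
      linear_combination (((u:ℂ)*I)^2) * Complex.I_sq
    rw [← mul_assoc, this]
  rw [e1, e2] at h
  exact h

lemma hasDerivAt_vert (x u : ℝ) : HasDerivAt (fun u : ℝ => aK x ((u:ℂ)*I))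
    ((I*((((u:ℂ)*I))^2+x) * aK x ((u:ℂ)*I)) * I) u := by
  have h := (aK_hasDerivAt_z x ((u:ℂ)*I)).comp (u:ℂ) ((hasDerivAt_id (u:ℂ)).mul_const I)
  simpa using h.comp_ofReal

lemma hasDerivAt_horiz (x s : ℝ) : HasDerivAt (fun s : ℝ => aK x ((s:ℂ)+I))
    (I*((((s:ℂ)+I))^2+x) * aK x ((s:ℂ)+I)) s := by
  have h := (aK_hasDerivAt_z x ((s:ℂ)+I)).comp (s:ℂ) ((hasDerivAt_id (s:ℂ)).add_const I)
  simpa using h.comp_ofReal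

lemma tendsto_horiz (x : ℝ) : Tendsto (fun s : ℝ => aK x ((s:ℂ)+I)) atTop (𝓝 0) := by
  refine squeeze_zero_norm (a := fun s : ℝ => Real.exp (1/3 - x - s^2)) (fun s => ?_) ?_
  ·
    have h := aK_norm x s 1
    simp only [Complex.ofReal_one, one_mul] at h
    rw [h]
    apply le_of_eq
    congr 1
    ring
  · apply Real.tendsto_exp_atBot.comp
    have h2 : Tendsto (fun s : ℝ => -(s^2)) atTop atBot :=
      tendsto_neg_atTop_atBot.comp (tendsto_pow_atTop two_ne_zero)
    have h3 := tendsto_atBot_add_const_left atTop (1/3 - x) h2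
    apply h3.congr
    intro s
    ring

lemma int_vert (x : ℝ) :
    ∫ u in (0:ℝ)..1, (-(((u:ℂ)*I)^2) - x) * aK x ((u:ℂ)*I) = aK x I - 1 := by
  have hd : ∀ u ∈ Set.uIcc (0:ℝ) 1, HasDerivAt (fun u : ℝ => aK x ((u:ℂ)*I))
      ((-(((u:ℂ)*I)^2) - x) * aK x ((u:ℂ)*I)) u := by
    intro u _
    have h := hasDerivAt_vert x u
    convert h using 1
    have : ((I*((((u:ℂ)*I))^2+x)) * aK x ((u:ℂ)*I)) * I
        = (I*I) * ((((u:ℂ)*I))^2+x) * aK x ((u:ℂ)*I) := by ring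
    rw [this, Complex.I_mul_I]
    ring
  rw [intervalIntegral.integral_eq_sub_of_hasDerivAt hd
    (Continuous.intervalIntegrable (by
      exact (by continuity : Continuous fun u : ℝ => (-(((u:ℂ)*I)^2) - (x:ℂ))).mul
        ((aK_continuous x).comp (by continuity))) _ _)]
  have h0 : aK x (((0:ℝ):ℂ)*I) = 1 := by
    rw [aK]
    norm_num [Complex.exp_zero]
  have h1 : aK x (((1:ℝ):ℂ)*I) = aK x I := by norm_num
  rw [h0, h1]

lemma int_horiz (x : ℝ) :
    ∫ s in Ioi (0:ℝ), I*((((s:ℂ)+I))^2+x) * aK x ((s:ℂ)+I) = - aK x I := by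
  have h := integral_Ioi_of_hasDerivAt_of_tendsto'
    (f := fun s : ℝ => aK x ((s:ℂ)+I))
    (f' := fun s : ℝ => I*((((s:ℂ)+I))^2+x) * aK x ((s:ℂ)+I))
    (a := 0) (m := 0)
    (fun s _ => hasDerivAt_horiz x s) (hInt3 x) (tendsto_horiz x)
  rw [h]
  norm_num

lemma ode_Gc (x : ℝ) : Gdd x = (x:ℂ) * Gc x - I := by
  have hsub1 : (∫ s in Ioi (0:ℝ), (-(((s:ℂ)+I)^2)) * aK x ((s:ℂ)+I))
      - (x:ℂ) * (∫ s in Ioi (0:ℝ), aK x ((s:ℂ)+I))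
      = ∫ s in Ioi (0:ℝ), ((-(((s:ℂ)+I)^2)) - x) * aK x ((s:ℂ)+I) := by
    rw [← MeasureTheory.integral_const_mul, ← MeasureTheory.integral_sub (hInt2 x)
      ((hInt0 x).const_mul _)]
    congr 1
    funext s
    ring
  have hval1 : (∫ s in Ioi (0:ℝ), ((-(((s:ℂ)+I)^2)) - x) * aK x ((s:ℂ)+I)) = I * (- aK x I) := by
    rw [← int_horiz x, ← MeasureTheory.integral_const_mul]
    congr 1
    funext s
    have : I * (I*((((s:ℂ)+I))^2+x) * aK x ((s:ℂ)+I))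
        = (I*I) * ((((s:ℂ)+I))^2+x) * aK x ((s:ℂ)+I) := by ring
    rw [this, Complex.I_mul_I]
    ring
  have hsub2 : (I • ∫ u in (0:ℝ)..1, (-(((u:ℂ)*I)^2)) * aK x ((u:ℂ)*I))
      - (x:ℂ) * (I • ∫ u in (0:ℝ)..1, aK x ((u:ℂ)*I))
      = I * ∫ u in (0:ℝ)..1, ((-(((u:ℂ)*I)^2)) - x) * aK x ((u:ℂ)*I) := by
    have i1 : IntervalIntegrable (fun u : ℝ => (-(((u:ℂ)*I)^2)) * aK x ((u:ℂ)*I)) volume 0 1 := by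
      apply Continuous.intervalIntegrable
      exact (by continuity : Continuous fun u : ℝ => -(((u:ℂ)*I)^2)).mul
        ((aK_continuous x).comp (by continuity))
    have i2 : IntervalIntegrable (fun u : ℝ => (x:ℂ) * aK x ((u:ℂ)*I)) volume 0 1 := by
      apply Continuous.intervalIntegrable
      exact continuous_const.mul ((aK_continuous x).comp (by continuity))
    have e : (∫ u in (0:ℝ)..1, ((-(((u:ℂ)*I)^2)) - (x:ℂ)) * aK x ((u:ℂ)*I))
        = (∫ u in (0:ℝ)..1, (-(((u:ℂ)*I)^2)) * aK x ((u:ℂ)*I))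
          - (x:ℂ) * ∫ u in (0:ℝ)..1, aK x ((u:ℂ)*I) := by
      rw [← intervalIntegral.integral_const_mul, ← intervalIntegral.integral_sub i1 i2]
      apply intervalIntegral.integral_congr
      intro u _
      ring
    rw [smul_eq_mul, smul_eq_mul, e]
    ring
  have expand : Gdd x - (x:ℂ) * Gc x
      = ((∫ s in Ioi (0:ℝ), (-(((s:ℂ)+I)^2)) * aK x ((s:ℂ)+I))
          - (x:ℂ) * (∫ s in Ioi (0:ℝ), aK x ((s:ℂ)+I)))
        + ((I • ∫ u in (0:ℝ)..1, (-(((u:ℂ)*I)^2)) * aK x ((u:ℂ)*I))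
          - (x:ℂ) * (I • ∫ u in (0:ℝ)..1, aK x ((u:ℂ)*I))) := by
    rw [Gdd, Gc]
    ring
  have : Gdd x - (x:ℂ) * Gc x = -I := by
    rw [expand, hsub1, hval1, hsub2, int_vert x]
    have : I * (aK x I - 1) = I * aK x I - I := by ring
    rw [this]
    ring
  linear_combination this

lemma exp_shift_decay (c : ℝ) : Tendsto (fun x : ℝ => Real.exp (c - x)) atTop (𝓝 0) := by
  apply Real.tendsto_exp_atBot.comp
  have h2 : Tendsto (fun x : ℝ => -x) atTop atBot := tendsto_neg_atTop_atBot
  have h3 := tendsto_atBot_add_const_left atTop c h2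
  apply h3.congr
  intro s
  ring

lemma Ioi_piece_decay (g : ℂ → ℂ) (hg : Continuous g) (n : ℕ) (C : ℝ)
    (hb : ∀ s : ℝ, 0 ≤ s → ‖g ((s:ℂ)+I)‖ ≤ C * (s+1)^n) :
    Tendsto (fun x : ℝ => ∫ s in Ioi (0:ℝ), g ((s:ℂ)+I) * aK x ((s:ℂ)+I)) atTop (𝓝 0) := by
  set K : ℝ := ∫ s in Ioi (0:ℝ), (s+1)^n * Real.exp (-s^2) with hK
  have hC : (0:ℝ) ≤ C := by
    have h0 := (norm_nonneg (g (((0:ℝ):ℂ)+I))).trans (hb 0 le_rfl)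
    simpa using h0
  refine squeeze_zero_norm (a := fun x : ℝ => Real.exp (1/3 - x) * (C * K)) (fun x => ?_) ?_
  · calc ‖∫ s in Ioi (0:ℝ), g ((s:ℂ)+I) * aK x ((s:ℂ)+I)‖
        ≤ ∫ s in Ioi (0:ℝ), ‖g ((s:ℂ)+I) * aK x ((s:ℂ)+I)‖ := norm_integral_le_integral_norm _
      _ ≤ ∫ s in Ioi (0:ℝ), (C * Real.exp (1/3 - x)) * ((s+1)^n * Real.exp (-s^2)) := by
          apply integral_mono_of_nonneg
          · filter_upwards [] with s
            exact norm_nonneg _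
          · exact (int_poly_gauss n).const_mul _
          · filter_upwards [ae_restrict_mem measurableSet_Ioi] with s hs
            have hs0 : (0:ℝ) ≤ s := le_of_lt hs
            rw [norm_mul]
            have h1 : ‖aK x ((s:ℂ)+I)‖ = Real.exp (1/3 - x) * Real.exp (-s^2) := by
              have hn := aK_norm x s 1
              simp only [Complex.ofReal_one, one_mul] at hn
              rw [hn, ← Real.exp_add]
              ring_nf
            rw [h1]
            calc ‖g ((s:ℂ)+I)‖ * (Real.exp (1/3 - x) * Real.exp (-s^2))
                ≤ (C * (s+1)^n) * (Real.exp (1/3 - x) * Real.exp (-s^2)) :=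
                  mul_le_mul_of_nonneg_right (hb s hs0) (by positivity)
              _ = (C * Real.exp (1/3 - x)) * ((s+1)^n * Real.exp (-s^2)) := by ring
      _ = Real.exp (1/3 - x) * (C * K) := by
          rw [MeasureTheory.integral_const_mul, hK]
          ring
  · have := (exp_shift_decay (1/3)).mul_const (C * K)
    simpa using this

lemma int_piece_decay (g : ℂ → ℂ) (hg : Continuous g)
    (hb1 : ∀ u : ℝ, u ∈ Icc (0:ℝ) 1 → ‖g ((u:ℂ)*I)‖ ≤ 1) :
    Tendsto (fun x : ℝ => I • ∫ u in (0:ℝ)..1, g ((u:ℂ)*I) * aK x ((u:ℂ)*I)) atTop (𝓝 0) := by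
  refine squeeze_zero_norm' ?_ ?_ (a := fun x : ℝ => Real.exp (1/3) / x)
  · filter_upwards [eventually_ge_atTop (1:ℝ)] with x hx
    have hx0 : (0:ℝ) < x := lt_of_lt_of_le one_pos hx
    have hb : ∀ u ∈ Icc (0:ℝ) 1, ‖g ((u:ℂ)*I) * aK x ((u:ℂ)*I)‖
        ≤ Real.exp (1/3) * Real.exp (-x*u) := by
      intro u hu
      rw [norm_mul, aK_norm_vert]
      have h3 : u^3 ≤ 1 := pow_le_one₀ hu.1 hu.2
      calc ‖g ((u:ℂ)*I)‖ * Real.exp (u^3/3 - x*u)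
          ≤ 1 * Real.exp (u^3/3 - x*u) :=
            mul_le_mul_of_nonneg_right (hb1 u hu) (Real.exp_pos _).le
        _ = Real.exp (u^3/3 - x*u) := one_mul _
        _ ≤ Real.exp (1/3) * Real.exp (-x*u) := by
            rw [← Real.exp_add]
            apply Real.exp_le_exp.mpr
            linarith
    calc ‖I • ∫ u in (0:ℝ)..1, g ((u:ℂ)*I) * aK x ((u:ℂ)*I)‖
        = ‖∫ u in (0:ℝ)..1, g ((u:ℂ)*I) * aK x ((u:ℂ)*I)‖ := by
          rw [norm_smul, Complex.norm_I, one_mul]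
      _ ≤ ∫ u in (0:ℝ)..1, ‖g ((u:ℂ)*I) * aK x ((u:ℂ)*I)‖ :=
          intervalIntegral.norm_integral_le_integral_norm zero_le_one
      _ ≤ ∫ u in (0:ℝ)..1, Real.exp (1/3) * Real.exp (-x*u) := by
          apply intervalIntegral.integral_mono_on zero_le_one _ _ hb
          · exact Continuous.intervalIntegrable
              ((hg.comp (by continuity)).mul ((aK_continuous x).comp (by continuity))).norm _ _
          · exact Continuous.intervalIntegrable (by continuity) _ _
      _ = Real.exp (1/3) * ((1 - Real.exp (-x))/x) := by
          rw [intervalIntegral.integral_const_mul, exp_int _ (ne_of_gt hx0)]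
      _ ≤ Real.exp (1/3) / x := by
          rw [div_eq_mul_one_div (Real.exp (1/3))]
          gcongr
          linarith [(Real.exp_pos (-x)).le]
  · exact Tendsto.div_atTop tendsto_const_nhds tendsto_id

lemma Gc_decay : Tendsto Gc atTop (𝓝 0) := by
  have h1 := Ioi_piece_decay (fun _ => 1) continuous_const 0 1 (fun s _ => by simp)
  have h2 := int_piece_decay (fun _ => 1) continuous_const (fun u _ => by simp)
  have h := h1.add h2
  rw [add_zero] at h
  apply h.congr
  intro x
  rw [Gc]
  simp only [one_mul]

lemma Gd_decay : Tendsto Gd atTop (𝓝 0) := by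
  have h1 := Ioi_piece_decay (fun z => I*z) (by continuity) 1 1
    (fun s hs => by
      rw [norm_mul, Complex.norm_I, one_mul, one_mul, pow_one]
      exact norm_le_aux s hs)
  have h2 := int_piece_decay (fun z => I*z) (by continuity)
    (fun u hu => by
      rw [norm_mul, Complex.norm_I, one_mul, norm_mul, Complex.norm_I, mul_one,
        Complex.norm_real, Real.norm_eq_abs, _root_.abs_of_nonneg hu.1]
      exact hu.2)
  have h := h1.add h2
  rw [add_zero] at h
  exact h.congr (fun x => by rw [Gd])

lemma HasDerivAt.creal {f : ℝ → ℂ} {f' : ℂ} {x : ℝ} (h : HasDerivAt f f' x) :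
    HasDerivAt (fun t => (f t).re) f'.re x := by
  have hc := (Complex.reCLM.hasFDerivAt.comp x h.hasFDerivAt).hasDerivAt
  exact hc.congr_deriv (by simp)

noncomputable def A1 (x : ℝ) : ℝ := (1/Real.pi) * (Gd x).re

lemma Ai_fun_eq : Ai = fun x => (1/Real.pi) * (Gc x).re := funext Ai_eq

lemma hasDerivAt_Ai (x : ℝ) : HasDerivAt Ai (A1 x) x := by
  rw [Ai_fun_eq]
  exact ((hasDerivAt_Gc x).creal).const_mul (1/Real.pi)

lemma deriv_Ai (x : ℝ) : deriv Ai x = A1 x := (hasDerivAt_Ai x).deriv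

lemma hasDerivAt_A1 (x : ℝ) : HasDerivAt A1 (x * Ai x) x := by
  have h := ((hasDerivAt_Gd x).creal).const_mul (1/Real.pi)
  have he : (1/Real.pi) * (Gdd x).re = x * Ai x := by
    rw [ode_Gc, Ai_eq]
    simp only [Complex.sub_re, Complex.mul_re, Complex.I_re, Complex.ofReal_re,
      Complex.ofReal_im, Complex.I_im]
    ring
  rw [← he]
  exact h

lemma Ai_decay : Tendsto Ai atTop (𝓝 0) := by
  rw [Ai_fun_eq]
  have h := (Complex.continuous_re.tendsto 0).comp Gc_decay
  have h2 := h.const_mul (1/Real.pi)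
  simpa using h2

lemma A1_decay : Tendsto A1 atTop (𝓝 0) := by
  have h := (Complex.continuous_re.tendsto 0).comp Gd_decay
  have h2 := h.const_mul (1/Real.pi)
  have h3 : Tendsto (fun x : ℝ => (1/Real.pi) * (Gd x).re) atTop (𝓝 ((1/Real.pi) * ((0:ℂ)).re)) := h2
  show Tendsto (fun x => A1 x) atTop (𝓝 0)
  simpa [A1] using h3

lemma Ai_continuous : Continuous Ai :=
  continuous_iff_continuousAt.mpr (fun t => (hasDerivAt_Ai t).differentiableAt.continuousAt)

lemma A1_continuous : Continuous A1 :=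
  continuous_iff_continuousAt.mpr (fun t => (hasDerivAt_A1 t).differentiableAt.continuousAt)

lemma energy_hasDeriv (t : ℝ) :
    HasDerivAt (fun t => (A1 t)^2 - t * (Ai t)^2) (-(Ai t)^2) t := by
  have h1 := (hasDerivAt_A1 t).pow 2
  have h2 := (hasDerivAt_id t).mul ((hasDerivAt_Ai t).pow 2)
  have h := h1.sub h2
  exact h.congr_deriv (by simp only [id_eq, Pi.pow_apply]; push_cast; ring)

lemma energy_antitone : Antitone (fun t => (A1 t)^2 - t * (Ai t)^2) := by
  apply antitone_of_deriv_nonpos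
  · exact fun t => (energy_hasDeriv t).differentiableAt
  · intro t
    rw [(energy_hasDeriv t).deriv]
    exact neg_nonpos.mpr (sq_nonneg _)

lemma cross_hasDeriv (t : ℝ) :
    HasDerivAt (fun t => Ai t * A1 t) ((A1 t)^2 + t * (Ai t)^2) t := by
  have h := (hasDerivAt_Ai t).mul (hasDerivAt_A1 t)
  exact h.congr_deriv (by ring)

lemma cross_decay : Tendsto (fun t => Ai t * A1 t) atTop (𝓝 0) := by
  simpa using Ai_decay.mul A1_decay

lemma cross_monotoneOn : MonotoneOn (fun t => Ai t * A1 t) (Ici (0:ℝ)) := by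
  apply monotoneOn_of_deriv_nonneg (convex_Ici 0)
  · exact (Ai_continuous.mul A1_continuous).continuousOn
  · intro t _
    exact (cross_hasDeriv t).differentiableAt.differentiableWithinAt
  · intro t ht
    rw [(cross_hasDeriv t).deriv]
    rw [interior_Ici] at ht
    have ht0 : (0:ℝ) ≤ t := le_of_lt ht
    have := sq_nonneg (A1 t)
    have := sq_nonneg (Ai t)
    nlinarith

lemma cross_nonpos (t : ℝ) (ht : (0:ℝ) ≤ t) : Ai t * A1 t ≤ 0 := by
  apply ge_of_tendsto cross_decay
  filter_upwards [eventually_ge_atTop t] with s hs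
  exact cross_monotoneOn ht (le_trans ht hs) hs

lemma sq_Ai_antitoneOn : AntitoneOn (fun t => (Ai t)^2) (Ici (0:ℝ)) := by
  apply antitoneOn_of_deriv_nonpos (convex_Ici 0)
  · exact (Ai_continuous.pow 2).continuousOn
  · intro t _
    exact ((hasDerivAt_Ai t).pow 2).differentiableAt.differentiableWithinAt
  · intro t ht
    rw [((hasDerivAt_Ai t).fun_pow 2).deriv]
    rw [interior_Ici] at ht
    have h := cross_nonpos t (le_of_lt ht)
    norm_num
    nlinarith

lemma abs_Ai_le_abs_Ai_zero (t : ℝ) (ht : (0:ℝ) ≤ t) : |Ai t| ≤ |Ai 0| := by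
  have h := sq_Ai_antitoneOn (self_mem_Ici) ht ht
  rw [← Real.sqrt_sq_eq_abs, ← Real.sqrt_sq_eq_abs]
  exact Real.sqrt_le_sqrt h

/-- For every zero `a < 0` of `Ai` and every `x ≥ 0`, one has `|Ai(x + a)| ≤ x·|Ai'(a)|`. -/
theorem airy_translate_linear_bound (a : ℝ) (ha : a < 0) (hzero : Ai a = 0) :
    ∀ x : ℝ, 0 ≤ x → |Ai (x + a)| ≤ x * |deriv Ai a| := by
  have hA1bound : ∀ s ∈ Icc a 0, |A1 s| ≤ |A1 a| := by
    intro s hs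
    have hE : (A1 s)^2 - s * (Ai s)^2 ≤ (A1 a)^2 - a * (Ai a)^2 :=
      energy_antitone hs.1
    have hEa : (A1 a)^2 - a * (Ai a)^2 = (A1 a)^2 := by rw [hzero]; ring
    have hs2 : s * (Ai s)^2 ≤ 0 := mul_nonpos_of_nonpos_of_nonneg hs.2 (sq_nonneg _)
    have h2 : (A1 s)^2 ≤ (A1 a)^2 := by
      have := hE
      rw [hEa] at this
      nlinarith
    rw [← Real.sqrt_sq_eq_abs, ← Real.sqrt_sq_eq_abs]
    exact Real.sqrt_le_sqrt h2
  have key : ∀ c ∈ Icc a (0:ℝ), |Ai c| ≤ |A1 a| * (c - a) := by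
    intro c hc
    have h := norm_image_sub_le_of_norm_deriv_le_segment'
      (f := Ai) (f' := A1) (a := a) (b := 0) (C := |A1 a|)
      (fun s hs => (hasDerivAt_Ai s).hasDerivWithinAt)
      (fun s hs => by rw [Real.norm_eq_abs]; exact hA1bound s ⟨hs.1, hs.2.le⟩)
      c hc
    rw [hzero, sub_zero, Real.norm_eq_abs] at h
    exact h
  intro x hx
  rw [deriv_Ai]
  rcases le_or_gt (x + a) 0 with hc | hc
  · have hmem : x + a ∈ Icc a 0 := ⟨by linarith, hc⟩
    have h := key (x+a) hmem
    calc |Ai (x+a)| ≤ |A1 a| * (x + a - a) := h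
      _ = x * |A1 a| := by ring
  · have h0 : (0:ℝ) ∈ Icc a 0 := ⟨le_of_lt ha, le_refl 0⟩
    have h1 : |Ai (x+a)| ≤ |Ai 0| := abs_Ai_le_abs_Ai_zero (x+a) (le_of_lt hc)
    have h2 : |Ai 0| ≤ |A1 a| * (0 - a) := key 0 h0
    have h3 : -a ≤ x := by linarith
    calc |Ai (x+a)| ≤ |A1 a| * (0 - a) := le_trans h1 h2
      _ = (-a) * |A1 a| := by ring
      _ ≤ x * |A1 a| := mul_le_mul_of_nonneg_right h3 (abs_nonneg _)
end

section
/- If a ≤ b < 0 are two zeros of Ai (i.e. Ai(a) = Ai(b) = 0), then |Ai'(b)| ≤ |Ai'(a)|; that is, |Ai'| evaluated at the zeros of Ai is nondecreasing as the zeros move toward −∞. -/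
open MeasureTheory Filter Set

open MeasureTheory Filter Set intervalIntegral Topology

noncomputable section

namespace AiryAux

def A0 (R x : ℝ) : ℝ := ∫ t in (0:ℝ)..R, Real.cos (t ^ 3 / 3 + x * t)
def A1 (R x : ℝ) : ℝ := ∫ t in (0:ℝ)..R, -(t * Real.sin (t ^ 3 / 3 + x * t))
def A2 (R x : ℝ) : ℝ := ∫ t in (0:ℝ)..R, -(t ^ 2 * Real.cos (t ^ 3 / 3 + x * t))

lemma contc (x : ℝ) : Continuous fun t : ℝ => Real.cos (t ^ 3 / 3 + x * t) := by fun_prop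
lemma conts (x : ℝ) : Continuous fun t : ℝ => Real.sin (t ^ 3 / 3 + x * t) := by fun_prop
lemma contc1 (x : ℝ) : Continuous fun t : ℝ => -(t * Real.sin (t ^ 3 / 3 + x * t)) := by fun_prop
lemma contc2 (x : ℝ) : Continuous fun t : ℝ => -(t ^ 2 * Real.cos (t ^ 3 / 3 + x * t)) := by
  fun_prop

lemma hasDerivAt_phase (x t : ℝ) :
    HasDerivAt (fun t : ℝ => t ^ 3 / 3 + x * t) (t ^ 2 + x) t := by
  have h1 : HasDerivAt (fun t : ℝ => t ^ 3 / 3) (t ^ 2) t := by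
    have := (hasDerivAt_pow 3 t).div_const 3
    exact this.congr_deriv (by norm_num)
  have h2 : HasDerivAt (fun t : ℝ => x * t) x t := by
    simpa using (hasDerivAt_id t).const_mul x
  exact h1.add h2

lemma hasDerivAt_phase_x (t x : ℝ) :
    HasDerivAt (fun x : ℝ => t ^ 3 / 3 + x * t) t x := by
  simpa using (hasDerivAt_mul_const t).const_add (t ^ 3 / 3)

lemma hasDerivAt_sin_phase (x t : ℝ) :
    HasDerivAt (fun t : ℝ => Real.sin (t ^ 3 / 3 + x * t))
      (Real.cos (t ^ 3 / 3 + x * t) * (t ^ 2 + x)) t :=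
  (Real.hasDerivAt_sin _).comp t (hasDerivAt_phase x t)

lemma hasDerivAt_cos_phase (x t : ℝ) :
    HasDerivAt (fun t : ℝ => Real.cos (t ^ 3 / 3 + x * t))
      (-Real.sin (t ^ 3 / 3 + x * t) * (t ^ 2 + x)) t :=
  (Real.hasDerivAt_cos _).comp t (hasDerivAt_phase x t)

lemma hasDerivAt_cos_phase_x (t x : ℝ) :
    HasDerivAt (fun x : ℝ => Real.cos (t ^ 3 / 3 + x * t))
      (-(t * Real.sin (t ^ 3 / 3 + x * t))) x := by
  have := (Real.hasDerivAt_cos _).comp x (hasDerivAt_phase_x t x)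
  exact this.congr_deriv (by ring)

lemma hasDerivAt_sin_phase_x (t x : ℝ) :
    HasDerivAt (fun x : ℝ => -(t * Real.sin (t ^ 3 / 3 + x * t)))
      (-(t ^ 2 * Real.cos (t ^ 3 / 3 + x * t))) x := by
  have h := (((Real.hasDerivAt_sin _).comp x (hasDerivAt_phase_x t x)).const_mul t).neg
  exact h.congr_deriv (by ring)

lemma hasDerivAt_A0 (R x₀ : ℝ) : HasDerivAt (fun x => A0 R x) (A1 R x₀) x₀ := by
  have h := intervalIntegral.hasDerivAt_integral_of_dominated_loc_of_deriv_le
      (F := fun x t => Real.cos (t ^ 3 / 3 + x * t))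
      (F' := fun x t => -(t * Real.sin (t ^ 3 / 3 + x * t)))
      (bound := fun t => |t|) (μ := volume) (a := 0) (b := R) (x₀ := x₀) (s := Metric.ball x₀ 1) (Metric.ball_mem_nhds x₀ one_pos)
      (Eventually.of_forall fun x => (contc x).aestronglyMeasurable)
      ((contc x₀).intervalIntegrable 0 R)
      ((contc1 x₀).aestronglyMeasurable)
      (Eventually.of_forall fun t _ x _ => by
        rw [Real.norm_eq_abs, abs_neg, abs_mul]
        calc |t| * |Real.sin (t ^ 3 / 3 + x * t)| ≤ |t| * 1 := by
              gcongr; exact Real.abs_sin_le_one _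
          _ = |t| := mul_one _)
      (continuous_abs.intervalIntegrable 0 R)
      (Eventually.of_forall fun t _ x _ => hasDerivAt_cos_phase_x t x)
  exact h.2

lemma hasDerivAt_A1 (R x₀ : ℝ) : HasDerivAt (fun x => A1 R x) (A2 R x₀) x₀ := by
  have h := intervalIntegral.hasDerivAt_integral_of_dominated_loc_of_deriv_le
      (F := fun x t => -(t * Real.sin (t ^ 3 / 3 + x * t)))
      (F' := fun x t => -(t ^ 2 * Real.cos (t ^ 3 / 3 + x * t)))
      (bound := fun t => t ^ 2) (μ := volume) (a := 0) (b := R) (x₀ := x₀) (s := Metric.ball x₀ 1) (Metric.ball_mem_nhds x₀ one_pos)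
      (Eventually.of_forall fun x => (contc1 x).aestronglyMeasurable)
      ((contc1 x₀).intervalIntegrable 0 R)
      ((contc2 x₀).aestronglyMeasurable)
      (Eventually.of_forall fun t _ x _ => by
        rw [Real.norm_eq_abs, abs_neg, abs_mul, abs_pow]
        calc |t| ^ 2 * |Real.cos (t ^ 3 / 3 + x * t)| ≤ |t| ^ 2 * 1 := by
              gcongr; exact Real.abs_cos_le_one _
          _ = t ^ 2 := by rw [mul_one, sq_abs])
      ((continuous_pow 2).intervalIntegrable 0 R)
      (Eventually.of_forall fun t _ x _ => hasDerivAt_sin_phase_x t x)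
  exact h.2

lemma A2_eq (R x : ℝ) : A2 R x = x * A0 R x - Real.sin (R ^ 3 / 3 + x * R) := by
  have hftc : (∫ t in (0:ℝ)..R, Real.cos (t ^ 3 / 3 + x * t) * (t ^ 2 + x))
      = Real.sin (R ^ 3 / 3 + x * R) - Real.sin ((0:ℝ) ^ 3 / 3 + x * 0) := by
    apply intervalIntegral.integral_eq_sub_of_hasDerivAt
    · exact fun t _ => hasDerivAt_sin_phase x t
    · exact ((contc x).mul (by fun_prop)).intervalIntegrable 0 R
  have hsplit : A2 R x = (∫ t in (0:ℝ)..R, x * Real.cos (t ^ 3 / 3 + x * t))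
      - ∫ t in (0:ℝ)..R, Real.cos (t ^ 3 / 3 + x * t) * (t ^ 2 + x) := by
    rw [← intervalIntegral.integral_sub (f := fun t => x * Real.cos (t ^ 3 / 3 + x * t))
      (g := fun t => Real.cos (t ^ 3 / 3 + x * t) * (t ^ 2 + x)) ((continuous_const.mul (contc x)).intervalIntegrable 0 R)
      (((contc x).mul (by fun_prop)).intervalIntegrable 0 R)]
    apply intervalIntegral.integral_congr
    intro t _
    ring
  rw [hsplit, hftc, intervalIntegral.integral_const_mul]
  simp [A0]

lemma tail_bound {R S : ℝ} (u v u' v' bnd : ℝ → ℝ) {cb cv : ℝ}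
    (hu : ∀ t ∈ uIcc R S, HasDerivAt u (u' t) t)
    (hv : ∀ t ∈ uIcc R S, HasDerivAt v (v' t) t)
    (hu'i : IntervalIntegrable u' volume R S)
    (hv'i : IntervalIntegrable v' volume R S)
    (hub : ∀ t ∈ uIcc R S, |u t| ≤ 1)
    (hvb : ∀ t ∈ uIcc R S, |v t| ≤ cv)
    (hbnd : ∀ t ∈ uIcc R S, |u t * v' t| ≤ bnd t)
    (hbndi : IntervalIntegrable bnd volume R S)
    (hbint : |∫ t in R..S, bnd t| ≤ cb) :
    |∫ t in R..S, u' t * v t| ≤ 2 * cv + cb := by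
  have ibp := intervalIntegral.integral_mul_deriv_eq_deriv_mul hu hv hu'i hv'i
  have heq : (∫ t in R..S, u' t * v t)
      = u S * v S - u R * v R - ∫ t in R..S, u t * v' t := by linarith
  have h2 : |∫ t in R..S, u t * v' t| ≤ cb := by
    have h := intervalIntegral.norm_integral_le_abs_of_norm_le
      (f := fun t => u t * v' t) (g := bnd) (μ := volume) (a := R) (b := S)
      ((ae_restrict_mem measurableSet_uIoc).mono fun t ht => by
        rw [Real.norm_eq_abs]; exact hbnd t (uIoc_subset_uIcc ht)) hbndi
    rw [Real.norm_eq_abs] at h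
    exact h.trans hbint
  have hR' : R ∈ uIcc R S := left_mem_uIcc
  have hS' : S ∈ uIcc R S := right_mem_uIcc
  have h3 : |u S * v S| ≤ cv := by
    rw [abs_mul]
    nlinarith [hub S hS', hvb S hS', abs_nonneg (u S), abs_nonneg (v S)]
  have h4 : |u R * v R| ≤ cv := by
    rw [abs_mul]
    nlinarith [hub R hR', hvb R hR', abs_nonneg (u R), abs_nonneg (v R)]
  rw [heq, abs_le]
  obtain ⟨h3a, h3b⟩ := abs_le.mp h3
  obtain ⟨h4a, h4b⟩ := abs_le.mp h4
  obtain ⟨h2a, h2b⟩ := abs_le.mp h2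
  constructor <;> linarith

lemma denom_facts {x R S t : ℝ} (hR1 : 1 ≤ R) (hRx : 2 * |x| + 2 ≤ R ^ 2) (hRS : R ≤ S)
    (ht : t ∈ uIcc R S) : R ≤ t ∧ t ^ 2 / 2 + 1 ≤ t ^ 2 + x := by
  rw [uIcc_of_le hRS] at ht
  refine ⟨ht.1, ?_⟩
  have h1 : R ≤ t := ht.1
  have h2 : R ^ 2 ≤ t ^ 2 := by nlinarith
  have h3 : -|x| ≤ x := neg_abs_le x
  nlinarith

section bounds

variable {x R S : ℝ} (hR1 : 1 ≤ R) (hRx : 2 * |x| + 2 ≤ R ^ 2) (hRS : R ≤ S)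

include hR1 hRx hRS

lemma denom_pos : ∀ t ∈ uIcc R S, 0 < t ^ 2 + x := fun t ht => by
  have h := denom_facts hR1 hRx hRS ht
  nlinarith [h.2, h.1]

lemma t_pos : ∀ t ∈ uIcc R S, 0 < t := fun t ht =>
  lt_of_lt_of_le (lt_of_lt_of_le one_pos hR1) (denom_facts hR1 hRx hRS ht).1

lemma hasDerivAt_denom_inv : ∀ t ∈ uIcc R S,
    HasDerivAt (fun t : ℝ => (t ^ 2 + x)⁻¹) (-(2 * t) / (t ^ 2 + x) ^ 2) t := by
  intro t ht
  have h0 : HasDerivAt (fun t : ℝ => t ^ 2 + x) (2 * t) t := by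
    simpa using (hasDerivAt_pow 2 t).add_const x
  exact h0.inv (denom_pos hR1 hRx hRS t ht).ne'

lemma bnd3_integral :
    |∫ t in R..S, 8 * (t ^ 3)⁻¹| ≤ 4 / R ^ 2 := by
  have hRpos : (0:ℝ) < R := lt_of_lt_of_le one_pos hR1
  have hval : (∫ t in R..S, 8 * (t ^ 3)⁻¹)
      = -(4 * (S ^ 2)⁻¹) - -(4 * (R ^ 2)⁻¹) := by
    apply intervalIntegral.integral_eq_sub_of_hasDerivAt (f := fun y => -(4 * (y ^ 2)⁻¹))
    · intro t ht
      have htpos := t_pos hR1 hRx hRS t ht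
      have h := (((hasDerivAt_pow 2 t).inv (pow_ne_zero 2 htpos.ne')).const_mul (4:ℝ)).neg
      exact h.congr_deriv (by field_simp; ring)
    · apply ContinuousOn.intervalIntegrable
      apply ContinuousOn.mul continuousOn_const
      exact ContinuousOn.inv₀ (by fun_prop) fun t ht =>
        pow_ne_zero 3 (t_pos hR1 hRx hRS t ht).ne'
  rw [hval]
  have hSpos : (0:ℝ) < S := lt_of_lt_of_le hRpos hRS
  have hmono' : (S ^ 2)⁻¹ ≤ (R ^ 2)⁻¹ := by
    rw [inv_eq_one_div, inv_eq_one_div]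
    exact one_div_le_one_div_of_le (by positivity) (by nlinarith)
  have hmono : 4 * (S ^ 2)⁻¹ ≤ 4 * (R ^ 2)⁻¹ := by linarith
  have hnn : (0:ℝ) ≤ 4 * (S ^ 2)⁻¹ := by positivity
  rw [abs_of_nonneg (by linarith), div_eq_mul_inv]
  linarith

lemma bnd2_integral :
    |∫ t in R..S, 10 * (t ^ 2)⁻¹| ≤ 10 / R := by
  have hRpos : (0:ℝ) < R := lt_of_lt_of_le one_pos hR1
  have hval : (∫ t in R..S, 10 * (t ^ 2)⁻¹)
      = -(10 * S⁻¹) - -(10 * R⁻¹) := by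
    apply intervalIntegral.integral_eq_sub_of_hasDerivAt (f := fun y => -(10 * y⁻¹))
    · intro t ht
      have htpos := t_pos hR1 hRx hRS t ht
      have h := ((hasDerivAt_inv htpos.ne').const_mul (10:ℝ)).neg
      exact h.congr_deriv (by ring)
    · apply ContinuousOn.intervalIntegrable
      apply ContinuousOn.mul continuousOn_const
      exact ContinuousOn.inv₀ (by fun_prop) fun t ht =>
        pow_ne_zero 2 (t_pos hR1 hRx hRS t ht).ne'
  rw [hval]
  have hSpos : (0:ℝ) < S := lt_of_lt_of_le hRpos hRS
  have hmono' : S⁻¹ ≤ R⁻¹ := by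
    rw [inv_eq_one_div, inv_eq_one_div]
    exact one_div_le_one_div_of_le hRpos hRS
  have hmono : 10 * S⁻¹ ≤ 10 * R⁻¹ := by linarith
  have hnn : (0:ℝ) ≤ 10 * S⁻¹ := by positivity
  rw [abs_of_nonneg (by linarith), div_eq_mul_inv]
  linarith

lemma bound0 : |∫ t in R..S, Real.cos (t ^ 3 / 3 + x * t)| ≤ 8 / R ^ 2 := by
  have hRpos : (0:ℝ) < R := lt_of_lt_of_le one_pos hR1
  have hpos := denom_pos hR1 hRx hRS
  have htp := t_pos hR1 hRx hRS
  have hcong : (∫ t in R..S, Real.cos (t ^ 3 / 3 + x * t))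
      = ∫ t in R..S, (Real.cos (t ^ 3 / 3 + x * t) * (t ^ 2 + x)) * (t ^ 2 + x)⁻¹ := by
    apply intervalIntegral.integral_congr
    intro t ht
    dsimp only
    rw [mul_assoc, mul_inv_cancel₀ (hpos t ht).ne', mul_one]
  rw [hcong]
  have key := tail_bound (R := R) (S := S)
      (fun t => Real.sin (t ^ 3 / 3 + x * t))
      (fun t : ℝ => (t ^ 2 + x)⁻¹)
      (fun t => Real.cos (t ^ 3 / 3 + x * t) * (t ^ 2 + x))
      (fun t : ℝ => -(2 * t) / (t ^ 2 + x) ^ 2)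
      (fun t : ℝ => 8 * (t ^ 3)⁻¹)
      (cb := 4 / R ^ 2) (cv := 2 / R ^ 2)
      (fun t _ => hasDerivAt_sin_phase x t)
      (hasDerivAt_denom_inv hR1 hRx hRS)
      (((contc x).mul (by fun_prop)).intervalIntegrable R S)
      (by
        apply ContinuousOn.intervalIntegrable
        exact ContinuousOn.div (by fun_prop) (by fun_prop)
          fun t ht => pow_ne_zero 2 (hpos t ht).ne')
      (fun t _ => Real.abs_sin_le_one _)
      (fun t ht => by
        have h := denom_facts hR1 hRx hRS ht
        rw [abs_inv, abs_of_pos (hpos t ht)]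
        rw [inv_eq_one_div, div_le_div_iff₀ (hpos t ht) (by positivity)]
        nlinarith [h.1, h.2])
      (fun t ht => by
        have h := denom_facts hR1 hRx hRS ht
        have htpos := htp t ht
        rw [abs_mul, abs_div, abs_neg, abs_of_nonneg (by positivity : (0:ℝ) ≤ 2 * t),
          abs_of_nonneg (by positivity : (0:ℝ) ≤ (t ^ 2 + x) ^ 2)]
        have hsin : |Real.sin (t ^ 3 / 3 + x * t)| ≤ 1 := Real.abs_sin_le_one _
        have hdiv : 2 * t / (t ^ 2 + x) ^ 2 ≤ 8 * (t ^ 3)⁻¹ := by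
          have h2 : t ^ 2 / 2 ≤ t ^ 2 + x := by linarith [h.2]
          have hsq : (t ^ 2 / 2) ^ 2 ≤ (t ^ 2 + x) ^ 2 :=
            pow_le_pow_left₀ (by positivity) h2 2
          rw [inv_eq_one_div, mul_one_div,
            div_le_div_iff₀ (pow_pos (hpos t ht) 2) (pow_pos htpos 3)]
          nlinarith [hsq, htpos]
        nlinarith [abs_nonneg (Real.sin (t ^ 3 / 3 + x * t)),
          div_nonneg (by positivity : (0:ℝ) ≤ 2 * t)
            (by positivity : (0:ℝ) ≤ (t ^ 2 + x) ^ 2)])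
      (by
        apply ContinuousOn.intervalIntegrable
        apply ContinuousOn.mul continuousOn_const
        exact ContinuousOn.inv₀ (by fun_prop) fun t ht =>
          pow_ne_zero 3 (htp t ht).ne')
      (bnd3_integral hR1 hRx hRS)
  calc |∫ t in R..S, Real.cos (t ^ 3 / 3 + x * t) * (t ^ 2 + x) * (t ^ 2 + x)⁻¹|
      ≤ 2 * (2 / R ^ 2) + 4 / R ^ 2 := key
    _ = 8 / R ^ 2 := by ring

lemma bound1 : |∫ t in R..S, t * Real.sin (t ^ 3 / 3 + x * t)| ≤ 14 / R := by
  have hRpos : (0:ℝ) < R := lt_of_lt_of_le one_pos hR1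
  have hpos := denom_pos hR1 hRx hRS
  have htp := t_pos hR1 hRx hRS
  have hcong : (∫ t in R..S, t * Real.sin (t ^ 3 / 3 + x * t))
      = ∫ t in R..S, (Real.sin (t ^ 3 / 3 + x * t) * (t ^ 2 + x)) * (t * (t ^ 2 + x)⁻¹) := by
    apply intervalIntegral.integral_congr
    intro t ht
    dsimp only
    have hd := (hpos t ht).ne'
    field_simp
  rw [hcong]
  have key := tail_bound (R := R) (S := S)
      (fun t => -Real.cos (t ^ 3 / 3 + x * t))
      (fun t : ℝ => t * (t ^ 2 + x)⁻¹)
      (fun t => Real.sin (t ^ 3 / 3 + x * t) * (t ^ 2 + x))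
      (fun t : ℝ => 1 * (t ^ 2 + x)⁻¹ + t * (-(2 * t) / (t ^ 2 + x) ^ 2))
      (fun t : ℝ => 10 * (t ^ 2)⁻¹)
      (cb := 10 / R) (cv := 2 / R)
      (fun t _ => by
        have h := (hasDerivAt_cos_phase x t).neg
        exact h.congr_deriv (by ring))
      (fun t ht => (hasDerivAt_id t).mul (hasDerivAt_denom_inv hR1 hRx hRS t ht))
      (((conts x).mul (by fun_prop)).intervalIntegrable R S)
      (by
        apply ContinuousOn.intervalIntegrable
        apply ContinuousOn.add
        · exact continuousOn_const.mul
            (ContinuousOn.inv₀ (by fun_prop) fun t ht => (hpos t ht).ne')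
        · exact (continuous_id.continuousOn).mul
            (ContinuousOn.div (by fun_prop) (by fun_prop)
              fun t ht => pow_ne_zero 2 (hpos t ht).ne')) 
      (fun t _ => by rw [abs_neg]; exact Real.abs_cos_le_one _)
      (fun t ht => by
        have h := denom_facts hR1 hRx hRS ht
        have htpos := htp t ht
        rw [abs_mul, abs_of_pos htpos, abs_inv, abs_of_pos (hpos t ht),
          inv_eq_one_div, mul_one_div, div_le_div_iff₀ (hpos t ht) hRpos]
        nlinarith [h.1, h.2])
      (fun t ht => by
        have h := denom_facts hR1 hRx hRS ht
        have htpos := htp t ht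
        have hdpos := hpos t ht
        have hcos : |(-Real.cos (t ^ 3 / 3 + x * t))| ≤ 1 := by
          rw [abs_neg]; exact Real.abs_cos_le_one _
        have hv'b : |1 * (t ^ 2 + x)⁻¹ + t * (-(2 * t) / (t ^ 2 + x) ^ 2)|
            ≤ 10 * (t ^ 2)⁻¹ := by
          have htri := abs_add_le (1 * (t ^ 2 + x)⁻¹) (t * (-(2 * t) / (t ^ 2 + x) ^ 2))
          have hp1 : |1 * (t ^ 2 + x)⁻¹| ≤ 2 * (t ^ 2)⁻¹ := by
            rw [one_mul, abs_inv, abs_of_pos hdpos,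
              show (2:ℝ) * (t ^ 2)⁻¹ = 2 / t ^ 2 from (div_eq_mul_inv 2 (t^2)).symm,
              inv_eq_one_div, div_le_div_iff₀ hdpos (pow_pos htpos 2)]
            nlinarith [h.2]
          have hp2 : |t * (-(2 * t) / (t ^ 2 + x) ^ 2)| ≤ 8 * (t ^ 2)⁻¹ := by
            rw [abs_mul, abs_of_pos htpos, abs_div, abs_neg,
              abs_of_nonneg (by positivity : (0:ℝ) ≤ 2 * t),
              abs_of_nonneg (by positivity : (0:ℝ) ≤ (t ^ 2 + x) ^ 2),
              inv_eq_one_div, mul_one_div, mul_div_assoc'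
              ]
            rw [div_le_div_iff₀ (pow_pos hdpos 2) (pow_pos htpos 2)]
            have hsq : (t ^ 2 / 2) ^ 2 ≤ (t ^ 2 + x) ^ 2 :=
              pow_le_pow_left₀ (by positivity) (by nlinarith [h.2]) 2
            nlinarith [hsq, htpos]
          linarith
        calc |(-Real.cos (t ^ 3 / 3 + x * t))
              * (1 * (t ^ 2 + x)⁻¹ + t * (-(2 * t) / (t ^ 2 + x) ^ 2))|
            = |(-Real.cos (t ^ 3 / 3 + x * t))|
              * |1 * (t ^ 2 + x)⁻¹ + t * (-(2 * t) / (t ^ 2 + x) ^ 2)| := abs_mul _ _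
          _ ≤ 1 * (10 * (t ^ 2)⁻¹) := by
              apply mul_le_mul hcos (le_trans hv'b (le_refl _)) (abs_nonneg _) one_pos.le
          _ = 10 * (t ^ 2)⁻¹ := one_mul _)
      (by
        apply ContinuousOn.intervalIntegrable
        apply ContinuousOn.mul continuousOn_const
        exact ContinuousOn.inv₀ (by fun_prop) fun t ht =>
          pow_ne_zero 2 (htp t ht).ne')
      (bnd2_integral hR1 hRx hRS)
  calc |∫ t in R..S, Real.sin (t ^ 3 / 3 + x * t) * (t ^ 2 + x) * (t * (t ^ 2 + x)⁻¹)|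
      ≤ 2 * (2 / R) + 10 / R := key
    _ = 14 / R := by ring

lemma bound_sin : |∫ t in R..S, Real.sin (t ^ 3 / 3 + x * t)| ≤ 8 / R ^ 2 := by
  have hRpos : (0:ℝ) < R := lt_of_lt_of_le one_pos hR1
  have hpos := denom_pos hR1 hRx hRS
  have htp := t_pos hR1 hRx hRS
  have hcong : (∫ t in R..S, Real.sin (t ^ 3 / 3 + x * t))
      = ∫ t in R..S, (Real.sin (t ^ 3 / 3 + x * t) * (t ^ 2 + x)) * (t ^ 2 + x)⁻¹ := by
    apply intervalIntegral.integral_congr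
    intro t ht
    dsimp only
    rw [mul_assoc, mul_inv_cancel₀ (hpos t ht).ne', mul_one]
  rw [hcong]
  have key := tail_bound (R := R) (S := S)
      (fun t => -Real.cos (t ^ 3 / 3 + x * t))
      (fun t : ℝ => (t ^ 2 + x)⁻¹)
      (fun t => Real.sin (t ^ 3 / 3 + x * t) * (t ^ 2 + x))
      (fun t : ℝ => -(2 * t) / (t ^ 2 + x) ^ 2)
      (fun t : ℝ => 8 * (t ^ 3)⁻¹)
      (cb := 4 / R ^ 2) (cv := 2 / R ^ 2)
      (fun t _ => by
        have h := (hasDerivAt_cos_phase x t).neg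
        exact h.congr_deriv (by ring))
      (hasDerivAt_denom_inv hR1 hRx hRS)
      (((conts x).mul (by fun_prop)).intervalIntegrable R S)
      (by
        apply ContinuousOn.intervalIntegrable
        exact ContinuousOn.div (by fun_prop) (by fun_prop)
          fun t ht => pow_ne_zero 2 (hpos t ht).ne')
      (fun t _ => by rw [abs_neg]; exact Real.abs_cos_le_one _)
      (fun t ht => by
        have h := denom_facts hR1 hRx hRS ht
        rw [abs_inv, abs_of_pos (hpos t ht)]
        rw [inv_eq_one_div, div_le_div_iff₀ (hpos t ht) (by positivity)]
        nlinarith [h.1, h.2])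
      (fun t ht => by
        have h := denom_facts hR1 hRx hRS ht
        have htpos := htp t ht
        rw [abs_mul, abs_neg, abs_div, abs_neg,
          abs_of_nonneg (by positivity : (0:ℝ) ≤ 2 * t),
          abs_of_nonneg (by positivity : (0:ℝ) ≤ (t ^ 2 + x) ^ 2)]
        have hcos : |Real.cos (t ^ 3 / 3 + x * t)| ≤ 1 := Real.abs_cos_le_one _
        have hdiv : 2 * t / (t ^ 2 + x) ^ 2 ≤ 8 * (t ^ 3)⁻¹ := by
          have h2 : t ^ 2 / 2 ≤ t ^ 2 + x := by linarith [h.2]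
          have hsq : (t ^ 2 / 2) ^ 2 ≤ (t ^ 2 + x) ^ 2 :=
            pow_le_pow_left₀ (by positivity) h2 2
          rw [inv_eq_one_div, mul_one_div,
            div_le_div_iff₀ (pow_pos (hpos t ht) 2) (pow_pos htpos 3)]
          nlinarith [hsq, htpos]
        nlinarith [abs_nonneg (Real.cos (t ^ 3 / 3 + x * t)),
          div_nonneg (by positivity : (0:ℝ) ≤ 2 * t)
            (by positivity : (0:ℝ) ≤ (t ^ 2 + x) ^ 2)])
      (by
        apply ContinuousOn.intervalIntegrable
        apply ContinuousOn.mul continuousOn_const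
        exact ContinuousOn.inv₀ (by fun_prop) fun t ht =>
          pow_ne_zero 3 (htp t ht).ne')
      (bnd3_integral hR1 hRx hRS)
  calc |∫ t in R..S, Real.sin (t ^ 3 / 3 + x * t) * (t ^ 2 + x) * (t ^ 2 + x)⁻¹|
      ≤ 2 * (2 / R ^ 2) + 4 / R ^ 2 := key
    _ = 8 / R ^ 2 := by ring

end bounds

def N0 (x : ℝ) : ℝ := max 1 (Real.sqrt (2 * |x| + 2))

lemma N0_spec {x R : ℝ} (hR : N0 x ≤ R) : 1 ≤ R ∧ 2 * |x| + 2 ≤ R ^ 2 := by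
  have h1 : (1:ℝ) ≤ R := le_trans (le_max_left _ _) hR
  have h2 : Real.sqrt (2 * |x| + 2) ≤ R := le_trans (le_max_right _ _) hR
  have h3 : (0:ℝ) ≤ 2 * |x| + 2 := by positivity
  have h4 := Real.sq_sqrt h3
  have h5 := Real.sqrt_nonneg (2 * |x| + 2)
  exact ⟨h1, by nlinarith⟩

lemma N0_pos (x : ℝ) : (1:ℝ) ≤ N0 x := le_max_left _ _

lemma A0_sub (x m n : ℝ) :
    A0 m x - A0 n x = ∫ t in n..m, Real.cos (t ^ 3 / 3 + x * t) :=
  intervalIntegral.integral_interval_sub_left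
    ((contc x).intervalIntegrable 0 m) ((contc x).intervalIntegrable 0 n)

lemma A1_sub (x m n : ℝ) :
    A1 m x - A1 n x = ∫ t in n..m, -(t * Real.sin (t ^ 3 / 3 + x * t)) :=
  intervalIntegral.integral_interval_sub_left
    ((contc1 x).intervalIntegrable 0 m) ((contc1 x).intervalIntegrable 0 n)

lemma diff_bound0 {x N m n : ℝ} (hN : N0 x ≤ N) (hm : N ≤ m) (hn : N ≤ n) :
    |A0 m x - A0 n x| ≤ 8 / N ^ 2 := by
  obtain ⟨h1, h2⟩ := N0_spec hN
  have hNpos : (0:ℝ) < N := lt_of_lt_of_le one_pos h1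
  have key : ∀ p q : ℝ, N ≤ p → p ≤ q → |A0 q x - A0 p x| ≤ 8 / N ^ 2 := by
    intro p q hp hpq
    rw [A0_sub]
    have hb := bound0 (x := x) (R := p) (S := q) (le_trans h1 hp) (by nlinarith) hpq
    have hppos : (0:ℝ) < p := lt_of_lt_of_le hNpos hp
    have hmono : 8 / p ^ 2 ≤ 8 / N ^ 2 := by
      rw [div_le_div_iff₀ (pow_pos hppos 2) (pow_pos hNpos 2)]
      nlinarith
    linarith
  rcases le_total n m with h | h
  · exact key n m hn h
  · rw [abs_sub_comm]; exact key m n hm h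

lemma diff_bound1 {x N m n : ℝ} (hN : N0 x ≤ N) (hm : N ≤ m) (hn : N ≤ n) :
    |A1 m x - A1 n x| ≤ 14 / N := by
  obtain ⟨h1, h2⟩ := N0_spec hN
  have hNpos : (0:ℝ) < N := lt_of_lt_of_le one_pos h1
  have key : ∀ p q : ℝ, N ≤ p → p ≤ q → |A1 q x - A1 p x| ≤ 14 / N := by
    intro p q hp hpq
    rw [A1_sub]
    have hppos : (0:ℝ) < p := lt_of_lt_of_le hNpos hp
    have hb := bound1 (x := x) (R := p) (S := q) (le_trans h1 hp) (by nlinarith) hpq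
    have hint : (∫ t in p..q, -(t * Real.sin (t ^ 3 / 3 + x * t)))
        = -∫ t in p..q, t * Real.sin (t ^ 3 / 3 + x * t) := by
      rw [← intervalIntegral.integral_neg]
    have hmono : 14 / p ≤ 14 / N := by
      rw [div_le_div_iff₀ hppos hNpos]
      nlinarith
    rw [hint, abs_neg]
    linarith
  rcases le_total n m with h | h
  · exact key n m hn h
  · rw [abs_sub_comm]; exact key m n hm h

def fA (x : ℝ) : ℝ := limUnder atTop fun R => A0 R x
def gA (x : ℝ) : ℝ := limUnder atTop fun R => A1 R x

lemma cauchy_helper {u : ℝ → ℝ} {x : ℝ} {c : ℝ}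
    (hc : 0 < c)
    (hb : ∀ N m n : ℝ, N0 x ≤ N → N ≤ m → N ≤ n → |u m - u n| ≤ c / N) :
    CauchySeq u := by
  rw [Metric.cauchySeq_iff]
  intro ε hε
  refine ⟨max (N0 x) (c / ε + 1), fun m hm n hn => ?_⟩
  set N := max (N0 x) (c / ε + 1) with hNdef
  have hNN : N0 x ≤ N := le_max_left _ _
  have h8 : c / ε + 1 ≤ N := le_max_right _ _
  have hNpos : (0:ℝ) < N := lt_of_lt_of_le one_pos (le_trans (N0_pos x) hNN)
  have hd := hb N m n hNN hm hn
  rw [Real.dist_eq]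
  have h3 : c / N < ε := by
    rw [div_lt_iff₀ hNpos]
    have hh : ε * (c / ε + 1) = c + ε := by field_simp
    nlinarith [mul_le_mul_of_nonneg_left h8 hε.le]
  linarith

lemma tendsto_A0 (x : ℝ) : Tendsto (fun R => A0 R x) atTop (𝓝 (fA x)) := by
  have hc : CauchySeq fun R => A0 R x := by
    apply cauchy_helper (x := x) (c := 8) (by norm_num)
    intro N m n hN hm hn
    have h1 := (N0_spec hN).1
    have := diff_bound0 hN hm hn
    have hmono : 8 / N ^ 2 ≤ 8 / N := by
      rw [div_le_div_iff₀ (by positivity) (by positivity)]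
      nlinarith
    linarith
  obtain ⟨l, hl⟩ := cauchySeq_tendsto_of_complete hc
  rwa [show fA x = l from hl.limUnder_eq]

lemma tendsto_A1 (x : ℝ) : Tendsto (fun R => A1 R x) atTop (𝓝 (gA x)) := by
  have hc : CauchySeq fun R => A1 R x := by
    apply cauchy_helper (x := x) (c := 14) (by norm_num)
    intro N m n hN hm hn
    exact diff_bound1 hN hm hn
  obtain ⟨l, hl⟩ := cauchySeq_tendsto_of_complete hc
  rwa [show gA x = l from hl.limUnder_eq]

lemma fA_dist {x R : ℝ} (hR : N0 x ≤ R) : |fA x - A0 R x| ≤ 8 / R ^ 2 := by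
  have ht : Tendsto (fun S => |A0 S x - A0 R x|) atTop (𝓝 |fA x - A0 R x|) := by
    have := ((tendsto_A0 x).sub (tendsto_const_nhds (x := A0 R x))).abs
    simpa using this
  apply le_of_tendsto ht
  filter_upwards [eventually_ge_atTop R] with S hS
  exact diff_bound0 hR hS le_rfl

lemma gA_dist {x R : ℝ} (hR : N0 x ≤ R) : |gA x - A1 R x| ≤ 14 / R := by
  have ht : Tendsto (fun S => |A1 S x - A1 R x|) atTop (𝓝 |gA x - A1 R x|) := by
    have := ((tendsto_A1 x).sub (tendsto_const_nhds (x := A1 R x))).abs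
    simpa using this
  apply le_of_tendsto ht
  filter_upwards [eventually_ge_atTop R] with S hS
  exact diff_bound1 hR hS le_rfl

def N1 (x₀ : ℝ) : ℝ := max 1 (Real.sqrt (2 * |x₀| + 4))

lemma ball_abs {x₀ x : ℝ} (hx : x ∈ Metric.ball x₀ 1) : |x| ≤ |x₀| + 1 := by
  rw [Metric.mem_ball, Real.dist_eq] at hx
  have h := abs_sub_abs_le_abs_sub x x₀
  linarith [hx.le]

lemma N1_ge_N0 {x₀ x : ℝ} (hx : x ∈ Metric.ball x₀ 1) : N0 x ≤ N1 x₀ := by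
  apply max_le_max le_rfl
  apply Real.sqrt_le_sqrt
  have := ball_abs hx
  linarith

lemma N1_ge_one (x₀ : ℝ) : (1:ℝ) ≤ N1 x₀ := le_max_left _ _

lemma unif_A1 (x₀ : ℝ) :
    TendstoUniformlyOn (fun R x => A1 R x) gA atTop (Metric.ball x₀ 1) := by
  rw [Metric.tendstoUniformlyOn_iff]
  intro ε hε
  filter_upwards [eventually_ge_atTop (max (N1 x₀) (28 / ε))] with R hR x hx
  have h1 : N1 x₀ ≤ R := le_trans (le_max_left _ _) hR
  have h2 : 28 / ε ≤ R := le_trans (le_max_right _ _) hR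
  have hN0 : N0 x ≤ R := le_trans (N1_ge_N0 hx) h1
  have hR1 : (1:ℝ) ≤ R := le_trans (N1_ge_one x₀) h1
  have hRpos : (0:ℝ) < R := by linarith
  have hd := gA_dist hN0
  rw [Real.dist_eq]
  have h3 : 14 / R < ε := by
    rw [div_lt_iff₀ hRpos]
    have hmul := mul_le_mul_of_nonneg_left h2 hε.le
    have hh : ε * (28 / ε) = 28 := by field_simp
    nlinarith
  have h4 : |gA x - A1 R x| < ε := by linarith
  exact h4

lemma contA0 (x : ℝ) : Continuous fun R => A0 R x :=
  intervalIntegral.continuous_primitive (fun a b => (contc x).intervalIntegrable a b) 0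

lemma contA1 (x : ℝ) : Continuous fun R => A1 R x :=
  intervalIntegral.continuous_primitive (fun a b => (contc1 x).intervalIntegrable a b) 0

lemma contA2 (x : ℝ) : Continuous fun R => A2 R x :=
  intervalIntegral.continuous_primitive (fun a b => (contc2 x).intervalIntegrable a b) 0

def B0 (S x : ℝ) : ℝ := (1 / S) * ∫ R in S..(2 * S), A0 R x
def B1 (S x : ℝ) : ℝ := (1 / S) * ∫ R in S..(2 * S), A1 R x
def B2 (S x : ℝ) : ℝ := (1 / S) * ∫ R in S..(2 * S), A2 R x

lemma hasDerivAt_B0 {S : ℝ} (x₀ : ℝ) (hS : 1 ≤ S) :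
    HasDerivAt (fun x => B0 S x) (B1 S x₀) x₀ := by
  have hSpos : (0:ℝ) < S := lt_of_lt_of_le one_pos hS
  have h := intervalIntegral.hasDerivAt_integral_of_dominated_loc_of_deriv_le
      (F := fun x R => A0 R x) (F' := fun x R => A1 R x)
      (bound := fun _ => 4 * S ^ 2) (μ := volume) (a := S) (b := 2 * S) (x₀ := x₀) (s := Metric.ball x₀ 1)
      (Metric.ball_mem_nhds x₀ one_pos)
      (Eventually.of_forall fun x => (contA0 x).aestronglyMeasurable)
      ((contA0 x₀).intervalIntegrable S (2 * S))
      ((contA1 x₀).aestronglyMeasurable)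
      (Eventually.of_forall fun R hR x _ => by
        rw [Set.uIoc_of_le (by linarith : S ≤ 2 * S)] at hR
        have hRpos : 0 < R := lt_trans hSpos hR.1
        have hb := intervalIntegral.norm_integral_le_of_norm_le_const
          (f := fun t => -(t * Real.sin (t ^ 3 / 3 + x * t))) (C := 2 * S) (a := 0) (b := R)
          (fun t ht => by
            rw [Set.uIoc_of_le hRpos.le] at ht
            rw [Real.norm_eq_abs, abs_neg, abs_mul]
            have h1 : |t| ≤ 2 * S := by
              rw [abs_of_pos ht.1]
              linarith [ht.2, hR.2]
            nlinarith [Real.abs_sin_le_one (t ^ 3 / 3 + x * t), abs_nonneg t,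
              abs_nonneg (Real.sin (t ^ 3 / 3 + x * t))])
        have h2 : (2 * S) * |R - 0| ≤ 4 * S ^ 2 := by
          rw [sub_zero, abs_of_pos hRpos]
          nlinarith [hR.2]
        calc ‖A1 R x‖ ≤ (2 * S) * |R - 0| := hb
          _ ≤ 4 * S ^ 2 := h2)
      intervalIntegrable_const
      (Eventually.of_forall fun R _ x _ => hasDerivAt_A0 R x)
  have h2 := h.2.const_mul (1 / S)
  exact h2

lemma hasDerivAt_B1 {S : ℝ} (x₀ : ℝ) (hS : 1 ≤ S) :
    HasDerivAt (fun x => B1 S x) (B2 S x₀) x₀ := by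
  have hSpos : (0:ℝ) < S := lt_of_lt_of_le one_pos hS
  have h := intervalIntegral.hasDerivAt_integral_of_dominated_loc_of_deriv_le
      (F := fun x R => A1 R x) (F' := fun x R => A2 R x)
      (bound := fun _ => 8 * S ^ 3) (μ := volume) (a := S) (b := 2 * S) (x₀ := x₀) (s := Metric.ball x₀ 1)
      (Metric.ball_mem_nhds x₀ one_pos)
      (Eventually.of_forall fun x => (contA1 x).aestronglyMeasurable)
      ((contA1 x₀).intervalIntegrable S (2 * S))
      ((contA2 x₀).aestronglyMeasurable)
      (Eventually.of_forall fun R hR x _ => by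
        rw [Set.uIoc_of_le (by linarith : S ≤ 2 * S)] at hR
        have hRpos : 0 < R := lt_trans hSpos hR.1
        have hb := intervalIntegral.norm_integral_le_of_norm_le_const
          (f := fun t => -(t ^ 2 * Real.cos (t ^ 3 / 3 + x * t))) (C := 4 * S ^ 2) (a := 0)
          (b := R)
          (fun t ht => by
            rw [Set.uIoc_of_le hRpos.le] at ht
            rw [Real.norm_eq_abs, abs_neg, abs_mul, abs_pow]
            have h1 : |t| ≤ 2 * S := by
              rw [abs_of_pos ht.1]
              linarith [ht.2, hR.2]
            nlinarith [Real.abs_cos_le_one (t ^ 3 / 3 + x * t), abs_nonneg t,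
              abs_nonneg (Real.cos (t ^ 3 / 3 + x * t))])
        have h2 : (4 * S ^ 2) * |R - 0| ≤ 8 * S ^ 3 := by
          rw [sub_zero, abs_of_pos hRpos]
          nlinarith [hR.2]
        calc ‖A2 R x‖ ≤ (4 * S ^ 2) * |R - 0| := hb
          _ ≤ 8 * S ^ 3 := h2)
      intervalIntegrable_const
      (Eventually.of_forall fun R _ x _ => hasDerivAt_A1 R x)
  have h2 := h.2.const_mul (1 / S)
  exact h2

lemma B2_eq (S x : ℝ) : B2 S x
    = x * B0 S x - (1 / S) * ∫ R in S..(2 * S), Real.sin (R ^ 3 / 3 + x * R) := by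
  unfold B2 B0
  have h1 : (∫ R in S..(2 * S), A2 R x)
      = ∫ R in S..(2 * S), (x * A0 R x - Real.sin (R ^ 3 / 3 + x * R)) :=
    intervalIntegral.integral_congr fun R _ => A2_eq R x
  rw [h1, intervalIntegral.integral_sub (f := fun R => x * A0 R x)
      (g := fun R => Real.sin (R ^ 3 / 3 + x * R))
      ((continuous_const.mul (contA0 x)).intervalIntegrable _ _)
      ((by fun_prop : Continuous fun R : ℝ => Real.sin (R ^ 3 / 3 + x * R)).intervalIntegrable
        _ _),
    intervalIntegral.integral_const_mul]
  ring

lemma avg_bound {S c L : ℝ} (hS : 1 ≤ S) {k : ℝ → ℝ} (hk : Continuous k)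
    (hc : ∀ R ∈ uIcc S (2 * S), |k R - L| ≤ c) :
    |(1 / S) * (∫ R in S..(2 * S), k R) - L| ≤ c := by
  have hSpos : (0:ℝ) < S := lt_of_lt_of_le one_pos hS
  have hsub : (∫ R in S..(2 * S), k R) - S * L = ∫ R in S..(2 * S), (k R - L) := by
    rw [intervalIntegral.integral_sub (hk.intervalIntegrable _ _) intervalIntegrable_const,
      intervalIntegral.integral_const, smul_eq_mul]
    ring
  have hb : |∫ R in S..(2 * S), (k R - L)| ≤ c * S := by
    have h := intervalIntegral.norm_integral_le_of_norm_le_const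
      (f := fun R => k R - L) (C := c) (a := S) (b := 2 * S)
      (fun R hR => by rw [Real.norm_eq_abs]; exact hc R (uIoc_subset_uIcc hR))
    rw [Real.norm_eq_abs] at h
    calc |∫ R in S..(2 * S), (k R - L)| ≤ c * |2 * S - S| := h
      _ = c * S := by rw [show (2 * S - S) = S by ring, abs_of_pos hSpos]
  have heq : (1 / S) * (∫ R in S..(2 * S), k R) - L
      = (1 / S) * ((∫ R in S..(2 * S), k R) - S * L) := by
    field_simp
  rw [heq, hsub, abs_mul, abs_of_nonneg (by positivity : (0:ℝ) ≤ 1 / S)]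
  calc (1 / S) * |∫ R in S..(2 * S), (k R - L)|
      ≤ (1 / S) * (c * S) := mul_le_mul_of_nonneg_left hb (by positivity)
    _ = c := by field_simp

lemma B0_close {x S : ℝ} (hS : N0 x ≤ S) : |B0 S x - fA x| ≤ 8 / S ^ 2 := by
  obtain ⟨hS1, _⟩ := N0_spec hS
  have hSpos : (0:ℝ) < S := lt_of_lt_of_le one_pos hS1
  apply avg_bound hS1 (contA0 x)
  intro R hR
  rw [uIcc_of_le (by linarith)] at hR
  have hRS : S ≤ R := hR.1
  have hRpos : (0:ℝ) < R := lt_of_lt_of_le hSpos hRS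
  have hR' : N0 x ≤ R := le_trans hS hRS
  have h := fA_dist hR'
  rw [abs_sub_comm]
  have hmono : 8 / R ^ 2 ≤ 8 / S ^ 2 := by
    rw [div_le_div_iff₀ (pow_pos hRpos 2) (pow_pos hSpos 2)]
    nlinarith
  linarith

lemma B1_close {x S : ℝ} (hS : N0 x ≤ S) : |B1 S x - gA x| ≤ 14 / S := by
  obtain ⟨hS1, _⟩ := N0_spec hS
  have hSpos : (0:ℝ) < S := lt_of_lt_of_le one_pos hS1
  apply avg_bound hS1 (contA1 x)
  intro R hR
  rw [uIcc_of_le (by linarith)] at hR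
  have hRS : S ≤ R := hR.1
  have hRpos : (0:ℝ) < R := lt_of_lt_of_le hSpos hRS
  have hR' : N0 x ≤ R := le_trans hS hRS
  have h := gA_dist hR'
  rw [abs_sub_comm]
  have hmono : 14 / R ≤ 14 / S := by
    rw [div_le_div_iff₀ hRpos hSpos]
    nlinarith
  linarith

lemma B2_close {x S : ℝ} (hS : N0 x ≤ S) :
    |B2 S x - x * fA x| ≤ (|x| + 1) * (8 / S) := by
  obtain ⟨hS1, hSx⟩ := N0_spec hS
  have hSpos : (0:ℝ) < S := lt_of_lt_of_le one_pos hS1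
  have herr : |(1 / S) * ∫ R in S..(2 * S), Real.sin (R ^ 3 / 3 + x * R)| ≤ 8 / S := by
    have hb := bound_sin (x := x) (R := S) (S := 2 * S) hS1 hSx (by linarith)
    rw [abs_mul, abs_of_nonneg (by positivity : (0:ℝ) ≤ 1 / S)]
    calc (1 / S) * |∫ R in S..(2 * S), Real.sin (R ^ 3 / 3 + x * R)|
        ≤ (1 / S) * (8 / S ^ 2) := mul_le_mul_of_nonneg_left hb (by positivity)
      _ ≤ 8 / S := by
          rw [show (1 / S) * (8 / S ^ 2) = 8 / S ^ 3 by ring,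
            div_le_div_iff₀ (pow_pos hSpos 3) hSpos]
          nlinarith
  have h0 := B0_close hS
  have heq : B2 S x - x * fA x
      = x * (B0 S x - fA x) - (1 / S) * ∫ R in S..(2 * S), Real.sin (R ^ 3 / 3 + x * R) := by
    rw [B2_eq]
    ring
  rw [heq, sub_eq_add_neg]
  refine (abs_add_le _ _).trans ?_
  rw [abs_neg, abs_mul]
  have hm1 : |x| * |B0 S x - fA x| ≤ |x| * (8 / S) := by
    apply mul_le_mul_of_nonneg_left ?_ (abs_nonneg x)
    have : 8 / S ^ 2 ≤ 8 / S := by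
      rw [div_le_div_iff₀ (pow_pos hSpos 2) hSpos]
      nlinarith
    linarith
  nlinarith [abs_nonneg x, herr, hm1]

lemma unif_B2 (x₀ : ℝ) :
    TendstoUniformlyOn (fun S x => B2 S x) (fun x => x * fA x) atTop (Metric.ball x₀ 1) := by
  rw [Metric.tendstoUniformlyOn_iff]
  intro ε hε
  filter_upwards [eventually_ge_atTop (max (N1 x₀) (16 * (|x₀| + 2) / ε))] with S hSbig x hx
  have h1 : N1 x₀ ≤ S := le_trans (le_max_left _ _) hSbig
  have h2 : 16 * (|x₀| + 2) / ε ≤ S := le_trans (le_max_right _ _) hSbig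
  have hN0 : N0 x ≤ S := le_trans (N1_ge_N0 hx) h1
  have hS1 : (1:ℝ) ≤ S := le_trans (N1_ge_one x₀) h1
  have hSpos : (0:ℝ) < S := by linarith
  have hd := B2_close hN0
  have hxb := ball_abs hx
  rw [Real.dist_eq, abs_sub_comm]
  have hlt : (|x| + 1) * (8 / S) < ε := by
    have hle : (|x| + 1) * (8 / S) ≤ (|x₀| + 2) * (8 / S) :=
      mul_le_mul_of_nonneg_right (by linarith) (by positivity)
    have key : (|x₀| + 2) * (8 / S) < ε := by
      rw [show (|x₀| + 2) * (8 / S) = ((|x₀| + 2) * 8) / S by ring, div_lt_iff₀ hSpos]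
      have hmul := mul_le_mul_of_nonneg_left h2 hε.le
      have hh : ε * (16 * (|x₀| + 2) / ε) = 16 * (|x₀| + 2) := by field_simp
      nlinarith [abs_nonneg x₀]
    linarith
  linarith

lemma tendsto_B1 (x : ℝ) : Tendsto (fun S => B1 S x) atTop (𝓝 (gA x)) := by
  rw [tendsto_iff_dist_tendsto_zero]
  apply squeeze_zero' (Eventually.of_forall fun S => dist_nonneg) (g := fun S => 14 / S) ?_ ?_
  · filter_upwards [eventually_ge_atTop (N0 x)] with S hS
    rw [Real.dist_eq]
    exact B1_close hS
  · have h : Tendsto (fun S : ℝ => (14:ℝ) * S⁻¹) atTop (𝓝 (14 * 0)) :=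
      tendsto_inv_atTop_zero.const_mul 14
    simpa [div_eq_mul_inv] using h

lemma hasDerivAt_fA (x₀ : ℝ) : HasDerivAt fA (gA x₀) x₀ :=
  hasDerivAt_of_tendstoUniformlyOn Metric.isOpen_ball (unif_A1 x₀)
    (Eventually.of_forall fun R x _ => hasDerivAt_A0 R x)
    (fun x _ => tendsto_A0 x) (Metric.mem_ball_self one_pos)

lemma hasDerivAt_gA (x₀ : ℝ) : HasDerivAt gA (x₀ * fA x₀) x₀ := by
  apply hasDerivAt_of_tendstoUniformlyOn Metric.isOpen_ball (unif_B2 x₀) ?_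
    (fun x _ => tendsto_B1 x) (Metric.mem_ball_self one_pos)
  filter_upwards [eventually_ge_atTop (1:ℝ)] with S hS x _
  exact hasDerivAt_B1 x hS

end AiryAux

end

lemma Ai_eq_fA (x : ℝ) : Ai x = (1 / Real.pi) * AiryAux.fA x := rfl

lemma hasDerivAt_Ai_s6 (x : ℝ) : HasDerivAt Ai ((1 / Real.pi) * AiryAux.gA x) x := by
  have h : Ai = fun x => (1 / Real.pi) * AiryAux.fA x := funext Ai_eq_fA
  rw [h]
  exact (AiryAux.hasDerivAt_fA x).const_mul (1 / Real.pi)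

/-- If `a ≤ b < 0` are two zeros of `Ai`, then `|Ai'(b)| ≤ |Ai'(a)|`: `|Ai'|` evaluated at the
zeros of `Ai` is nondecreasing as the zeros move toward `−∞`. -/
theorem airy_deriv_at_zeros_monotone (a b : ℝ) (hab : a ≤ b) (hb : b < 0)
    (hza : Ai a = 0) (hzb : Ai b = 0) :
    |deriv Ai b| ≤ |deriv Ai a| := by
  have hpi : (1 / Real.pi) ≠ 0 := one_div_ne_zero Real.pi_ne_zero
  have hfa : AiryAux.fA a = 0 := by
    have h := hza
    rw [Ai_eq_fA] at h
    rcases mul_eq_zero.mp h with h' | h'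
    · exact absurd h' hpi
    · exact h'
  have hfb : AiryAux.fA b = 0 := by
    have h := hzb
    rw [Ai_eq_fA] at h
    rcases mul_eq_zero.mp h with h' | h'
    · exact absurd h' hpi
    · exact h'
  set W : ℝ → ℝ := fun x => AiryAux.gA x ^ 2 - x * AiryAux.fA x ^ 2 with hWdef
  have hWd : ∀ x, HasDerivAt W (-(AiryAux.fA x ^ 2)) x := by
    intro x
    have h1 := (AiryAux.hasDerivAt_gA x).pow 2
    have h2 := (hasDerivAt_id' (x := x)).mul ((AiryAux.hasDerivAt_fA x).pow 2)
    have h := h1.sub h2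
    exact h.congr_deriv (by simp only [Pi.pow_apply]; push_cast; ring)
  have hanti : AntitoneOn W (Set.Icc a b) := by
    apply antitoneOn_of_deriv_nonpos (convex_Icc a b)
    · exact fun x _ => (hWd x).continuousAt.continuousWithinAt
    · exact fun x _ => (hWd x).differentiableAt.differentiableWithinAt
    · intro x _
      rw [(hWd x).deriv]
      exact neg_nonpos.mpr (sq_nonneg _)
  have hWba : W b ≤ W a :=
    hanti (Set.left_mem_Icc.mpr hab) (Set.right_mem_Icc.mpr hab) hab
  have hWa : W a = AiryAux.gA a ^ 2 := by simp [hWdef, hfa]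
  have hWb : W b = AiryAux.gA b ^ 2 := by simp [hWdef, hfb]
  have hsq : AiryAux.gA b ^ 2 ≤ AiryAux.gA a ^ 2 := by rw [← hWb, ← hWa]; exact hWba
  have habs : |AiryAux.gA b| ≤ |AiryAux.gA a| := by
    nlinarith [abs_nonneg (AiryAux.gA a), abs_nonneg (AiryAux.gA b),
      sq_abs (AiryAux.gA a), sq_abs (AiryAux.gA b)]
  rw [(hasDerivAt_Ai_s6 a).deriv, (hasDerivAt_Ai_s6 b).deriv, abs_mul, abs_mul]
  exact mul_le_mul_of_nonneg_left habs (abs_nonneg _)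
end
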